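/- arXiv:2404.11454 — 3 statements merged into one kernel-verified Lean document; each statement's English description precedes it below -/
import Mathlib

section
/- Let r and m be positive integers and let n₁, …, n_m be positive integers satisfying n₁ > r and n_{j+1} > (n₁ · n₂ ⋯ n_j)^r for every 1 ≤ j ≤ m−1. For each j let S_{n_j}(2) ⊂ ℝ^{n_j} be the set of standard basis vectors of ℝ^{n_j}. Then for every r-coloring of the Cartesian product S_{n₁}(2) × ⋯ × S_{n_m}(2) ⊂ ℝ^{n₁+⋯+n_m}, there exists a monochromatic isometric copy of {0, √2}^m (the vertex set of an m-dimensional hypercube of sidelength √2). -/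
open Finset


/-- The vertex set `{0, s}^m ⊂ ℝ^m` of an `m`-dimensional hypercube of sidelength `s`. -/
def cubeVertices (m : ℕ) (s : ℝ) : Set (EuclideanSpace ℝ (Fin m)) :=
  {x | ∀ i, x i = 0 ∨ x i = s}

/-- The Cartesian product `S_{n 0}(2) × ⋯ × S_{n (m-1)}(2)`: tuples whose `j`-th entry
is a standard basis vector of `ℝ^{n j}`, viewed inside the Euclidean space with index
set `(j : Fin m) × Fin (n j)`. -/
def simplexProduct (m : ℕ) (n : Fin m → ℕ) :
    Set (EuclideanSpace ℝ ((j : Fin m) × Fin (n j))) :=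
  {x | ∀ j : Fin m, ∃ i : Fin (n j), ∀ i' : Fin (n j),
    x ⟨j, i'⟩ = if i' = i then 1 else 0}


def embSel {m : ℕ} {n : Fin m → ℕ} (v : ∀ j, Fin (n j)) :
    EuclideanSpace ℝ ((j : Fin m) × Fin (n j)) :=
  WithLp.toLp 2 (fun p : (j : Fin m) × Fin (n j) => if p.2 = v p.1 then 1 else 0)

lemma embSel_apply {m : ℕ} {n : Fin m → ℕ} (v : ∀ j, Fin (n j))
    (j : Fin m) (i : Fin (n j)) :
    embSel v ⟨j, i⟩ = if i = v j then 1 else 0 := rfl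

lemma dist_embSel {m : ℕ} {n : Fin m → ℕ} (v w : ∀ j, Fin (n j)) :
    dist (embSel v) (embSel w) = Real.sqrt (∑ j, if v j = w j then (0:ℝ) else 2) := by
  rw [EuclideanSpace.dist_eq]
  congr 1
  rw [← Finset.univ_sigma_univ, Finset.sum_sigma]
  apply Finset.sum_congr rfl
  intro j _
  by_cases h : v j = w j
  · simp [embSel_apply, h]
  · have hterm : ∀ i : Fin (n j),
        dist (embSel v ⟨j, i⟩) (embSel w ⟨j, i⟩) ^ 2
          = (if i = v j then (1:ℝ) else 0) + (if i = w j then (1:ℝ) else 0) := by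
      intro i
      rw [embSel_apply, embSel_apply]
      have h' : ¬ w j = v j := fun e => h e.symm
      by_cases h1 : i = v j
      · have h2 : ¬ i = w j := by rw [h1]; exact h
        simp [h1, h2, h, Real.dist_eq]
      · by_cases h2 : i = w j
        · simp [h1, h2, h', Real.dist_eq]
        · simp [h1, h2]
    rw [Finset.sum_congr rfl fun i _ => hterm i]
    rw [Finset.sum_add_distrib]
    simp [Finset.sum_ite_eq', h]
    norm_num


lemma two_mul_card_pairs (k : ℕ) :
    2 * Fintype.card {q : Fin k × Fin k // q.1 < q.2} ≤ k ^ 2 := by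
  classical
  rw [Fintype.card_subtype]
  set A := Finset.univ.filter (fun q : Fin k × Fin k => q.1 < q.2) with hA
  set B := Finset.univ.filter (fun q : Fin k × Fin k => q.2 < q.1) with hB
  have hcard : A.card = B.card := by
    apply Finset.card_bij (fun q _ => q.swap)
    · intro q hq; simp [hA, hB] at *; simpa using hq
    · intro q₁ h₁ q₂ h₂ h
      have h' : q₁.2 = q₂.2 ∧ q₁.1 = q₂.1 := by simpa [Prod.ext_iff] using h
      exact Prod.ext h'.2 h'.1
    · intro q hq; exact ⟨q.swap, by simp [hA, hB] at *; simpa using hq, by simp⟩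
  have hdisj : Disjoint A B := by
    rw [Finset.disjoint_left]
    intro q hq hq'
    simp [hA, hB] at hq hq'
    exact absurd (lt_trans hq hq') (lt_irrefl _)
  have hle : A.card + B.card ≤ Fintype.card (Fin k × Fin k) := by
    rw [← Finset.card_union_of_disjoint hdisj]
    exact le_trans (Finset.card_le_univ _) (le_of_eq (Finset.card_univ))
  simp only [Fintype.card_prod, Fintype.card_fin] at hle
  have : k * k = k ^ 2 := by ring
  omega

lemma prod_castSucc_le (m : ℕ) (n : Fin (m + 2) → ℕ) (j : Fin (m + 1)) :
    ∏ i ∈ Finset.univ.filter (fun i => i ≤ Fin.castSucc j), n i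
      = ∏ i ∈ Finset.univ.filter (fun i => i ≤ j), n (Fin.castSucc i) := by
  symm
  apply Finset.prod_bij (fun i _ => Fin.castSucc i)
  · intro i hi
    simp only [Finset.mem_filter, Finset.mem_univ, true_and] at *
    exact Fin.castSucc_le_castSucc_iff.mpr hi
  · intro i₁ _ i₂ _ h; exact Fin.castSucc_injective _ h
  · intro i hi
    simp only [Finset.mem_filter, Finset.mem_univ, true_and] at hi
    have hi' : i.val ≤ j.val := by simpa [Fin.le_def] using hi
    have hlt : i.val < m + 1 := lt_of_le_of_lt hi' j.isLt
    refine ⟨⟨i.val, hlt⟩, ?_, ?_⟩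
    · simp only [Finset.mem_filter, Finset.mem_univ, true_and, Fin.le_def]
      exact hi'
    · ext; simp [Fin.castSucc, Fin.castAdd, Fin.castLE]
  · intro i _; rfl

/-- trivial case of one color -/
lemma key_one (m : ℕ) (n : Fin m → ℕ) (h2 : ∀ j, 2 ≤ n j)
    (c : (∀ j, Fin (n j)) → Fin 1) :
    ∃ a b : ∀ j, Fin (n j), (∀ j, a j < b j) ∧
      ∀ v : ∀ j, Fin (n j), (∀ j, v j = a j ∨ v j = b j) → c v = c a := by
  refine ⟨fun j => ⟨0, by have := h2 j; omega⟩, fun j => ⟨1, h2 j⟩, ?_, ?_⟩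
  · intro j; simp [Fin.lt_def]
  · intro v _; exact Subsingleton.elim _ _

/-- Key combinatorial lemma: monochromatic combinatorial cube. -/
lemma key_cube (r : ℕ) (hr : 0 < r) : ∀ (m : ℕ) (n : Fin (m + 1) → ℕ),
    (∀ j, 2 ≤ n j) → r < n 0 →
    (∀ j : Fin (m + 1), ∀ hj : j.val + 1 < m + 1,
      (∏ i ∈ Finset.univ.filter (fun i => i ≤ j), n i) ^ r < n ⟨j.val + 1, hj⟩) →
    ∀ c : (∀ j, Fin (n j)) → Fin r,
    ∃ a b : ∀ j, Fin (n j), (∀ j, a j < b j) ∧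
      ∀ v : ∀ j, Fin (n j), (∀ j, v j = a j ∨ v j = b j) → c v = c a := by
  intro m
  induction m with
  | zero =>
    intro n h2 h0 _ c
    classical
    set mk : Fin (n 0) → (∀ j : Fin 1, Fin (n j)) :=
      fun i j => Fin.cases (motive := fun j => Fin (n j)) i (fun k => k.elim0) j with hmk
    have hpig : Fintype.card (Fin r) < Fintype.card (Fin (n 0)) := by simpa using h0
    obtain ⟨i, i', hne, heq⟩ := Fintype.exists_ne_map_eq_of_card_lt (fun i => c (mk i)) hpig
    have main : ∀ i i' : Fin (n 0), i < i' → c (mk i) = c (mk i') →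
        ∃ a b : ∀ j, Fin (n j), (∀ j, a j < b j) ∧
          ∀ v : ∀ j, Fin (n j), (∀ j, v j = a j ∨ v j = b j) → c v = c a := by
      intro i i' hlt heq
      have hmk0 : ∀ i : Fin (n 0), mk i 0 = i := fun i => rfl
      refine ⟨mk i, mk i', ?_, ?_⟩
      · intro j
        have hj : j = 0 := Fin.fin_one_eq_zero j
        subst hj
        simpa [hmk0] using hlt
      · intro v hv
        have hfun : ∀ w : ∀ j : Fin 1, Fin (n j), w = mk (w 0) := by
          intro w; funext j
          have hj : j = 0 := Fin.fin_one_eq_zero j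
          subst hj; rfl
        rcases hv 0 with h | h
        · rw [hfun v, h, hmk0]
        · rw [hfun v, h, hmk0]; exact heq.symm
    rcases lt_or_gt_of_ne hne with h | h
    · exact main i i' h heq
    · exact main i' i h heq.symm
  | succ m IH =>
    intro n h2 h0 hstep c
    classical
    rcases eq_or_lt_of_le (Nat.succ_le_of_lt hr) with hr1 | hr2
    · obtain rfl : r = 1 := hr1.symm
      exact key_one _ n h2 c
    -- now 2 ≤ r
    set n' : Fin (m + 1) → ℕ := fun j => n j.castSucc with hn'
    have h2' : ∀ j, 2 ≤ n' j := fun j => h2 _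
    have h0' : r < n' 0 := by
      show r < n (Fin.castSucc 0)
      rw [Fin.castSucc_zero]; exact h0
    have hstep' : ∀ j : Fin (m + 1), ∀ hj : j.val + 1 < m + 1,
        (∏ i ∈ Finset.univ.filter (fun i => i ≤ j), n' i) ^ r < n' ⟨j.val + 1, hj⟩ := by
      intro j hj
      have h := hstep (Fin.castSucc j) (by simpa using Nat.lt_succ_of_lt hj)
      rw [prod_castSucc_le m n j] at h
      exact h
    set ct : Fin (n (Fin.last (m + 1))) → (∀ j, Fin (n' j)) → Fin r :=
      fun t x => c (Fin.snoc x t) with hct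
    choose a b hab hmono using fun t => IH n' h2' h0' hstep' (ct t)
    -- pigeonhole
    set T := ((∀ j : Fin (m + 1), {q : Fin (n' j) × Fin (n' j) // q.1 < q.2}) × Fin r) with hT
    set F : Fin (n (Fin.last (m + 1))) → T :=
      fun t => (fun j => ⟨(a t j, b t j), hab t j⟩, c (Fin.snoc (a t) t)) with hF
    set N := ∏ j, n' j with hN
    have hNr : N ^ r < n (Fin.last (m + 1)) := by
      have h := hstep ⟨m, by omega⟩ (Nat.lt_succ_self (m + 1))
      have hprod : ∏ i ∈ Finset.univ.filter (fun i => i ≤ (⟨m, by omega⟩ : Fin (m + 2))), n i = N := by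
        have : (⟨m, by omega⟩ : Fin (m + 2)) = Fin.castSucc (Fin.last m) := by ext; simp
        rw [this, prod_castSucc_le m n (Fin.last m), hN]
        congr 1
        apply Finset.filter_true_of_mem
        intro i _; exact Fin.le_last i
      rw [hprod] at h
      exact h
    have hcardT : Fintype.card T = (∏ j, Fintype.card {q : Fin (n' j) × Fin (n' j) // q.1 < q.2}) * r := by
      simp [hT, Fintype.card_pi]
    have hTbound : Fintype.card T ≤ N ^ r := by
      rw [hcardT]
      set P : Fin (m + 1) → ℕ := fun j => Fintype.card {q : Fin (n' j) × Fin (n' j) // q.1 < q.2} with hP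
      have h1 : ∏ j, (2 * P j) ≤ ∏ j, (n' j) ^ 2 :=
        Finset.prod_le_prod' (fun j _ => two_mul_card_pairs (n' j))
      have h2p : ∏ j, (2 * P j) = 2 ^ (m + 1) * ∏ j, P j := by
        rw [Finset.prod_mul_distrib, Finset.prod_const]
        simp
      have h3 : ∏ j, (n' j) ^ 2 = N ^ 2 := by rw [hN, ← Finset.prod_pow]
      have h22 : (2 : ℕ) ≤ 2 ^ (m + 1) := by
        calc (2 : ℕ) = 2 ^ 1 := (pow_one 2).symm
          _ ≤ 2 ^ (m + 1) := Nat.pow_le_pow_right (by norm_num) (by omega)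
      have h4 : 2 * ∏ j, P j ≤ N ^ 2 := by
        calc 2 * ∏ j, P j ≤ 2 ^ (m + 1) * ∏ j, P j := Nat.mul_le_mul_right _ h22
          _ = ∏ j, (2 * P j) := h2p.symm
          _ ≤ ∏ j, (n' j) ^ 2 := h1
          _ = N ^ 2 := h3
      have hrltN : r < N := by
        calc r < n' 0 := h0'
          _ ≤ N := Finset.single_le_prod' (fun i _ => le_trans (by norm_num) (h2' i)) (Finset.mem_univ 0)
      have hrle : r ≤ 2 * N ^ (r - 2) := by
        rcases Nat.lt_or_ge r 3 with h | h
        · obtain rfl : r = 2 := by omega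
          norm_num
        · have hN1 : N ≤ N ^ (r - 2) := by
            calc N = N ^ 1 := (pow_one N).symm
              _ ≤ N ^ (r - 2) := Nat.pow_le_pow_right (by omega) (by omega)
          omega
      have hpow : N ^ r = N ^ (r - 2) * N ^ 2 := by
        rw [← pow_add]; congr 1; omega
      calc (∏ j, P j) * r ≤ (∏ j, P j) * (2 * N ^ (r - 2)) := Nat.mul_le_mul_left _ hrle
        _ = N ^ (r - 2) * (2 * ∏ j, P j) := by ring
        _ ≤ N ^ (r - 2) * N ^ 2 := Nat.mul_le_mul_left _ h4
        _ = N ^ r := hpow.symm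
    have hpig : Fintype.card T < Fintype.card (Fin (n (Fin.last (m + 1)))) := by
      rw [Fintype.card_fin]; exact lt_of_le_of_lt hTbound hNr
    obtain ⟨t, t', hne, heq⟩ := Fintype.exists_ne_map_eq_of_card_lt F hpig
    have main : ∀ t t' : Fin (n (Fin.last (m + 1))), t < t' → F t = F t' →
        ∃ a b : ∀ j, Fin (n j), (∀ j, a j < b j) ∧
          ∀ v : ∀ j, Fin (n j), (∀ j, v j = a j ∨ v j = b j) → c v = c a := by
      intro t t' hlt heq
      have h1 := congrArg Prod.fst heq
      have hcc : c (Fin.snoc (a t) t) = c (Fin.snoc (a t') t') := congrArg Prod.snd heq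
      have haa : ∀ j, a t j = a t' j := by
        intro j
        have := Subtype.ext_iff.mp (congrFun h1 j)
        exact (Prod.ext_iff.mp this).1
      have hbb : ∀ j, b t j = b t' j := by
        intro j
        have := Subtype.ext_iff.mp (congrFun h1 j)
        exact (Prod.ext_iff.mp this).2
      refine ⟨Fin.snoc (a t) t, Fin.snoc (b t) t', ?_, ?_⟩
      · intro j
        refine Fin.lastCases ?_ ?_ j
        · simpa [Fin.snoc_last] using hlt
        · intro i; simpa [Fin.snoc_castSucc] using hab t i
      · intro v hv
        set s := v (Fin.last (m + 1)) with hs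
        set w : ∀ i : Fin (m + 1), Fin (n' i) := fun i => v (Fin.castSucc i) with hw
        have hvw : v = Fin.snoc w s := by
          funext j
          refine Fin.lastCases ?_ ?_ j
          · rw [Fin.snoc_last]
          · intro i; rw [Fin.snoc_castSucc]
        have hwcube : ∀ i, w i = a t i ∨ w i = b t i := by
          intro i
          have := hv (Fin.castSucc i)
          simpa [Fin.snoc_castSucc] using this
        have hsel : s = t ∨ s = t' := by
          have := hv (Fin.last (m + 1))
          simpa [Fin.snoc_last] using this
        rcases hsel with h | h
        · rw [hvw, h]
          exact hmono t w hwcube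
        · rw [hvw, h]
          have hwcube' : ∀ i, w i = a t' i ∨ w i = b t' i := by
            intro i; rw [← haa, ← hbb]; exact hwcube i
          have h5 : c (Fin.snoc w t') = c (Fin.snoc (a t') t') := hmono t' w hwcube'
          rw [h5]
          exact hcc.symm
    rcases lt_or_gt_of_ne hne with h | h
    · exact main t t' h heq
    · exact main t' t h heq.symm

/-- If `n 0 > r` and `n (j+1) > (n 0 ⋯ n j)^r` for all `j`, then every `r`-coloring of
`S_{n 0}(2) × ⋯ × S_{n (m-1)}(2)` contains a monochromatic isometric copy of the vertex
set `{0, √2}^m` of an `m`-dimensional hypercube of sidelength `√2`. -/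
theorem simplex_product_mono_cube (r m : ℕ) (hr : 0 < r) (hm : 0 < m)
    (n : Fin m → ℕ) (hpos : ∀ j, 0 < n j)
    (h0 : r < n ⟨0, hm⟩)
    (hstep : ∀ j : Fin m, ∀ hj : j.val + 1 < m,
      (∏ i ∈ Finset.univ.filter (fun i => i ≤ j), n i) ^ r < n ⟨j.val + 1, hj⟩) :
    ∀ χ : EuclideanSpace ℝ ((j : Fin m) × Fin (n j)) → Fin r,
      ∃ f : EuclideanSpace ℝ (Fin m) → EuclideanSpace ℝ ((j : Fin m) × Fin (n j)),
        Set.InjOn f (cubeVertices m (Real.sqrt 2)) ∧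
        (∀ x ∈ cubeVertices m (Real.sqrt 2), f x ∈ simplexProduct m n) ∧
        (∀ x ∈ cubeVertices m (Real.sqrt 2), ∀ y ∈ cubeVertices m (Real.sqrt 2),
          dist (f x) (f y) = dist x y) ∧
        (∀ x ∈ cubeVertices m (Real.sqrt 2), ∀ y ∈ cubeVertices m (Real.sqrt 2),
          χ (f x) = χ (f y)) := by
  intro χ
  classical
  obtain ⟨m', rfl⟩ : ∃ m', m = m' + 1 := ⟨m - 1, by omega⟩
  have hz : (0 : Fin (m' + 1)) = ⟨0, hm⟩ := Fin.ext (by simp)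
  have h0' : r < n 0 := by rw [hz]; exact h0
  have hs2 : Real.sqrt 2 ≠ 0 := by
    rw [Real.sqrt_ne_zero']; norm_num
  have hsq2 : Real.sqrt 2 ^ 2 = 2 := Real.sq_sqrt (by norm_num)
  have h2 : ∀ j : Fin (m' + 1), 2 ≤ n j := by
    intro ⟨jv, hjv⟩
    cases jv with
    | zero =>
      have e : (⟨0, hjv⟩ : Fin (m' + 1)) = ⟨0, hm⟩ := rfl
      rw [e]; omega
    | succ k =>
      have hs := hstep ⟨k, by omega⟩ hjv
      have hmem : (0 : Fin (m' + 1)) ∈ Finset.univ.filter (fun i => i ≤ (⟨k, by omega⟩ : Fin (m' + 1))) := by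
        simp [Fin.le_def]
      have hn0 : n 0 ≤ ∏ i ∈ Finset.univ.filter (fun i => i ≤ (⟨k, by omega⟩ : Fin (m' + 1))), n i :=
        Finset.single_le_prod' (fun i _ => hpos i) hmem
      have hpow : (∏ i ∈ Finset.univ.filter (fun i => i ≤ (⟨k, by omega⟩ : Fin (m' + 1))), n i)
          ≤ (∏ i ∈ Finset.univ.filter (fun i => i ≤ (⟨k, by omega⟩ : Fin (m' + 1))), n i) ^ r :=
        Nat.le_self_pow (by omega) _
      have hs' : (∏ i ∈ Finset.univ.filter (fun i => i ≤ (⟨k, by omega⟩ : Fin (m' + 1))), n i) ^ r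
          < n ⟨k + 1, hjv⟩ := hs
      omega
  set c : (∀ j, Fin (n j)) → Fin r := fun v => χ (embSel v) with hc
  obtain ⟨a, b, hab, hmono⟩ := key_cube r hr m' n h2 h0' hstep c
  set sel : EuclideanSpace ℝ (Fin (m' + 1)) → ∀ j, Fin (n j) :=
    fun x j => if x j = 0 then a j else b j with hsel
  refine ⟨fun x => embSel (sel x), ?_, ?_, ?_, ?_⟩
  · -- InjOn
    intro x hx y hy hfe
    have hselxy : ∀ j, sel x j = sel y j := by
      intro j
      have h' : embSel (sel x) ⟨j, sel x j⟩ = embSel (sel y) ⟨j, sel x j⟩ :=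
        congrArg (fun z : EuclideanSpace ℝ ((j : Fin (m' + 1)) × Fin (n j)) => z ⟨j, sel x j⟩) hfe
      have this := h'
      rw [embSel_apply, embSel_apply] at this
      simp only [if_pos rfl] at this
      by_contra hne
      rw [if_neg (fun e => hne e)] at this
      norm_num at this
    ext j
    rcases hx j with hxj | hxj <;> rcases hy j with hyj | hyj
    · rw [hxj, hyj]
    · exfalso
      have h' := hselxy j
      have e1 : sel x j = a j := by simp [hsel, hxj]
      have e2 : sel y j = b j := by simp [hsel, hyj, hs2]
      rw [e1, e2] at h'
      exact absurd h' (ne_of_lt (hab j))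
    · exfalso
      have h' := hselxy j
      have e1 : sel x j = b j := by simp [hsel, hxj, hs2]
      have e2 : sel y j = a j := by simp [hsel, hyj]
      rw [e1, e2] at h'
      exact absurd h'.symm (ne_of_lt (hab j))
    · rw [hxj, hyj]
  · -- membership
    intro x hx j
    exact ⟨sel x j, fun i' => embSel_apply (sel x) j i'⟩
  · -- distances
    intro x hx y hy
    rw [dist_embSel, EuclideanSpace.dist_eq]
    congr 1
    apply Finset.sum_congr rfl
    intro j _
    have d1 : dist (0:ℝ) (Real.sqrt 2) ^ 2 = 2 := by
      rw [Real.dist_eq, abs_sub_comm, sub_zero, abs_of_nonneg (Real.sqrt_nonneg 2)]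
      exact hsq2
    have d2 : dist (Real.sqrt 2) (0:ℝ) ^ 2 = 2 := by rw [dist_comm]; exact d1
    rcases hx j with hxj | hxj <;> rcases hy j with hyj | hyj
    · have e1 : sel x j = a j := by simp [hsel, hxj]
      have e2 : sel y j = a j := by simp [hsel, hyj]
      rw [e1, e2, if_pos rfl, hxj, hyj, dist_self]
      norm_num
    · have e1 : sel x j = a j := by simp [hsel, hxj]
      have e2 : sel y j = b j := by simp [hsel, hyj, hs2]
      rw [e1, e2, if_neg (ne_of_lt (hab j)), hxj, hyj]
      exact d1.symm
    · have e1 : sel x j = b j := by simp [hsel, hxj, hs2]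
      have e2 : sel y j = a j := by simp [hsel, hyj]
      rw [e1, e2, if_neg (Ne.symm (ne_of_lt (hab j))), hxj, hyj]
      exact d2.symm
    · have e1 : sel x j = b j := by simp [hsel, hxj, hs2]
      have e2 : sel y j = b j := by simp [hsel, hyj, hs2]
      rw [e1, e2, if_pos rfl, hxj, hyj, dist_self]
      norm_num
  · -- colors
    intro x hx y hy
    have hcube : ∀ z : EuclideanSpace ℝ (Fin (m' + 1)), z ∈ cubeVertices (m' + 1) (Real.sqrt 2) →
        c (sel z) = c a := by
      intro z hz
      apply hmono
      intro j
      rw [hsel]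
      by_cases h : z j = 0
      · left; simp [h]
      · right; simp [h]
    show c (sel x) = c (sel y)
    rw [hcube x hx, hcube y hy]
end

section
/- For every positive integer d and every finite set M ⊂ ℝ^d all of whose points have rational coordinates (where ℝ^d carries the ℓ₁ norm), there exists a positive integer n such that for every coloring of ℝⁿ equipped with the ℓ₁ (Manhattan) norm with an arbitrary set of colors, there exists an ℓ₁-isometric copy of M in ℝⁿ that is either monochromatic or rainbow. -/
open Finset

variable {C : Type} [Fintype C] [Nonempty C]

private def reqSize (C : Type) [Fintype C] : ℕ → ℕ
  | 0 => 0
  | t + 1 => Fintype.card C * reqSize C t + 1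

private lemma endHomog (χ : ℕ → ℕ → C) :
    ∀ (t : ℕ) (A : Finset ℕ), reqSize C t ≤ A.card →
    ∃ f : Fin t → ℕ, (∀ i, f i ∈ A) ∧ StrictMono f ∧
      ∀ (i j k : Fin t), i < j → i < k → χ (f i) (f j) = χ (f i) (f k) := by
  classical
  intro t
  induction t with
  | zero =>
    intro A _
    exact ⟨Fin.elim0, fun i => i.elim0, fun i => i.elim0, fun i => i.elim0⟩
  | succ t ih =>
    intro A hA
    have hne : A.Nonempty := by
      rw [← Finset.card_pos]
      have : 0 < reqSize C (t+1) := by simp [reqSize]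
      omega
    set a := A.min' hne with ha
    set B := A.erase a with hB
    have hBcard : Fintype.card C * reqSize C t ≤ B.card := by
      have : B.card = A.card - 1 := by
        rw [hB, Finset.card_erase_of_mem (A.min'_mem hne)]
      have h2 : reqSize C (t+1) = Fintype.card C * reqSize C t + 1 := rfl
      omega
    have : ∃ γ : C, reqSize C t ≤ (B.filter (fun x => χ a x = γ)).card := by
      by_contra hcon
      push_neg at hcon
      have hsum : B.card = ∑ γ : C, (B.filter (fun x => χ a x = γ)).card :=
        Finset.card_eq_sum_card_fiberwise (fun x _ => Finset.mem_univ (χ a x))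
      have hlt : ∑ γ : C, (B.filter (fun x => χ a x = γ)).card
          < ∑ _γ : C, reqSize C t :=
        Finset.sum_lt_sum_of_nonempty Finset.univ_nonempty (fun γ _ => hcon γ)
      simp only [Finset.sum_const, Finset.card_univ, smul_eq_mul] at hlt
      omega
    obtain ⟨γ, hγ⟩ := this
    obtain ⟨f', hf'mem, hf'mono, hf'eh⟩ := ih (B.filter (fun x => χ a x = γ)) hγ
    have hmem' : ∀ i, f' i ∈ A ∧ f' i ≠ a ∧ χ a (f' i) = γ := by
      intro i
      have := hf'mem i
      simp only [hB, Finset.mem_filter, Finset.mem_erase] at this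
      exact ⟨this.1.2, this.1.1, this.2⟩
    have halt : ∀ i, a < f' i := fun i =>
      lt_of_le_of_ne (A.min'_le _ (hmem' i).1) (Ne.symm (hmem' i).2.1)
    refine ⟨Fin.cons a f', ?_, ?_, ?_⟩
    · intro i
      rcases Fin.eq_zero_or_eq_succ i with rfl | ⟨i', rfl⟩
      · simpa using A.min'_mem hne
      · simpa using (hmem' i').1
    · intro i j hij
      have hj0 : j ≠ 0 := by
        rintro rfl; exact absurd hij (by simp [Fin.lt_iff_val_lt_val])
      obtain ⟨j', rfl⟩ := Fin.eq_succ_of_ne_zero hj0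
      rcases Fin.eq_zero_or_eq_succ i with rfl | ⟨i', rfl⟩
      · rw [Fin.cons_zero, Fin.cons_succ]; exact halt j'
      · rw [Fin.cons_succ, Fin.cons_succ]
        exact hf'mono (Fin.succ_lt_succ_iff.mp hij)
    · intro i j k hij hik
      have hj0 : j ≠ 0 := by
        rintro rfl; exact absurd hij (by simp [Fin.lt_iff_val_lt_val])
      have hk0 : k ≠ 0 := by
        rintro rfl; exact absurd hik (by simp [Fin.lt_iff_val_lt_val])
      obtain ⟨j', rfl⟩ := Fin.eq_succ_of_ne_zero hj0
      obtain ⟨k', rfl⟩ := Fin.eq_succ_of_ne_zero hk0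
      rcases Fin.eq_zero_or_eq_succ i with rfl | ⟨i', rfl⟩
      · simp only [Fin.cons_zero, Fin.cons_succ]
        rw [(hmem' j').2.2, (hmem' k').2.2]
      · simp only [Fin.cons_succ]
        exact hf'eh i' j' k' (Fin.succ_lt_succ_iff.mp hij) (Fin.succ_lt_succ_iff.mp hik)

private lemma ramseyPairsNat (C : Type) [Fintype C] [Nonempty C] (s : ℕ) :
    ∃ K : ℕ, 0 < K ∧ ∀ χ : ℕ → ℕ → C, ∃ f : Fin s → ℕ,
      (∀ i, f i < K) ∧ StrictMono f ∧ ∃ γ : C, ∀ i j, i < j → χ (f i) (f j) = γ := by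
  classical
  set t := Fintype.card C * s + 1 with ht
  refine ⟨reqSize C t + 1, by omega, fun χ => ?_⟩
  obtain ⟨f, hfmem, hfmono, hfeh⟩ :=
    endHomog χ t (Finset.range (reqSize C t)) (by simp)
  have hflt : ∀ i, f i < reqSize C t + 1 := by
    intro i; have := hfmem i; simp only [Finset.mem_range] at this; omega
  -- pigeonhole on the colors χ (f i) (f last)
  have htpos : 0 < t := by omega
  have hlast : ∀ i : Fin (t - 1), i.val < t := by intro i; omega
  set tl : Fin t := ⟨t - 1, by omega⟩ with htl
  set φ : Fin (Fintype.card C * s) → C := fun i => χ (f ⟨i.val, by omega⟩) (f tl) with hφ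
  have : ∃ γ : C, s ≤ (Finset.univ.filter (fun i => φ i = γ)).card := by
    by_contra hcon
    push_neg at hcon
    have hsum : (Finset.univ : Finset (Fin (Fintype.card C * s))).card
        = ∑ γ : C, (Finset.univ.filter (fun i => φ i = γ)).card :=
      Finset.card_eq_sum_card_fiberwise (fun x _ => Finset.mem_univ (φ x))
    have hlt : ∑ γ : C, (Finset.univ.filter (fun i => φ i = γ)).card
        < ∑ _γ : C, s :=
      Finset.sum_lt_sum_of_nonempty Finset.univ_nonempty (fun γ _ => hcon γ)
    simp only [Finset.sum_const, Finset.card_univ, smul_eq_mul, Fintype.card_fin] at hlt hsum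
    omega
  obtain ⟨γ, hγ⟩ := this
  obtain ⟨T, hTsub, hTcard⟩ := Finset.exists_subset_card_eq hγ
  set e := T.orderIsoOfFin hTcard with he
  set g : Fin s → ℕ := fun i => f ⟨(e i).val.val, by omega⟩ with hg
  have heval : ∀ i j : Fin s, i < j → ((e i).val.val : ℕ) < (e j).val.val := by
    intro i j hij
    have h1 : e i < e j := e.strictMono hij
    have h2 : (e i).val < (e j).val := Subtype.coe_lt_coe.mpr h1
    exact h2
  have hgmono : StrictMono g := by
    intro i j hij
    apply hfmono
    exact Fin.mk_lt_mk.mpr (heval i j hij)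
  refine ⟨g, fun i => hflt _, hgmono, γ, ?_⟩
  intro i j hij
  have hei : ((e i).val.val : ℕ) < t - 1 := by
    have := (e i : Fin (Fintype.card C * s)).isLt; omega
  have hej : ((e j).val.val : ℕ) < t - 1 := by
    have := (e j : Fin (Fintype.card C * s)).isLt; omega
  have heij : ((e i).val.val : ℕ) < (e j).val.val := heval i j hij
  have h1 : χ (g i) (g j) = χ (g i) (f tl) := by
    apply hfeh
    · exact Fin.mk_lt_mk.mpr heij
    · exact Fin.mk_lt_mk.mpr (by omega)
  have h2 : χ (g i) (f tl) = γ := by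
    have hmem : (e i : Fin (Fintype.card C * s)) ∈ Finset.univ.filter (fun i => φ i = γ) :=
      hTsub (e i).property
    simp only [Finset.mem_filter] at hmem
    have := hmem.2
    simpa [hφ, hg] using this
  rw [h1, h2]

private lemma ramseyPairs (C : Type) [Fintype C] [Nonempty C] (s : ℕ) :
    ∃ K : ℕ, 0 < K ∧ ∀ χ : Fin K → Fin K → C, ∃ f : Fin s → Fin K,
      StrictMono f ∧ ∃ γ : C, ∀ i j, i < j → χ (f i) (f j) = γ := by
  classical
  obtain ⟨K, hK, hprop⟩ := ramseyPairsNat C s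
  refine ⟨K, hK, fun χ => ?_⟩
  set χ' : ℕ → ℕ → C := fun x y =>
    if h : x < K ∧ y < K then χ ⟨x, h.1⟩ ⟨y, h.2⟩ else Classical.arbitrary C with hχ'
  obtain ⟨f, hflt, hfmono, γ, hγ⟩ := hprop χ'
  refine ⟨fun i => ⟨f i, hflt i⟩, fun i j hij => Fin.mk_lt_mk.mpr (hfmono hij), γ, ?_⟩
  intro i j hij
  have := hγ i j hij
  rw [hχ'] at this
  simpa [hflt i, hflt j] using this

/-- Product Ramsey theorem: a coloring of tuples of ordered pairs is constant
on the ordered boxes generated by a strictly monotone 4-element set per factor. -/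
private lemma prodRamsey (L : ℕ) (C : Type) [Fintype C] [Nonempty C] :
    ∃ K : ℕ, 0 < K ∧ ∀ c : (Fin L → Fin K × Fin K) → C,
      ∃ h : Fin L → Fin 4 → Fin K, (∀ ℓ, StrictMono (h ℓ)) ∧
        ∀ p q : Fin L → Fin 4 × Fin 4,
          (∀ ℓ, (p ℓ).1 < (p ℓ).2) → (∀ ℓ, (q ℓ).1 < (q ℓ).2) →
          c (fun ℓ => (h ℓ (p ℓ).1, h ℓ (p ℓ).2))
            = c (fun ℓ => (h ℓ (q ℓ).1, h ℓ (q ℓ).2)) := by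
  classical
  induction L with
  | zero =>
    refine ⟨1, one_pos, fun c => ⟨fun ℓ => Fin.elim0 ℓ, fun ℓ => ℓ.elim0, ?_⟩⟩
    intro p q _ _
    congr 1
    funext ℓ
    exact ℓ.elim0
  | succ L ih =>
    obtain ⟨K', hK', ihprop⟩ := ih
    obtain ⟨K₀, hK₀, rprop⟩ := ramseyPairs ((Fin L → Fin K' × Fin K') → C) 4
    refine ⟨max K₀ K', by omega, fun c => ?_⟩
    set ι₀ : Fin K₀ → Fin (max K₀ K') := Fin.castLE (le_max_left _ _) with hι₀
    set ι' : Fin K' → Fin (max K₀ K') := Fin.castLE (le_max_right _ _) with hι'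
    set χ₀ : Fin K₀ → Fin K₀ → ((Fin L → Fin K' × Fin K') → C) := fun u v B =>
      c (Fin.cons (ι₀ u, ι₀ v) (fun ℓ => (ι' (B ℓ).1, ι' (B ℓ).2))) with hχ₀
    obtain ⟨f, hfmono, γ, hγ⟩ := rprop χ₀
    obtain ⟨h', h'mono, h'prop⟩ := ihprop γ
    refine ⟨Fin.cons (ι₀ ∘ f) (fun ℓ => ι' ∘ h' ℓ), ?_, ?_⟩
    · intro ℓ
      rcases Fin.eq_zero_or_eq_succ ℓ with rfl | ⟨ℓ', rfl⟩
      · rw [Fin.cons_zero]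
        intro i j hij
        exact (Fin.lt_def.mpr (Fin.lt_def.mp (hfmono hij)))
      · rw [Fin.cons_succ]
        intro i j hij
        exact (Fin.lt_def.mpr (Fin.lt_def.mp (h'mono ℓ' hij)))
    · intro p q hp hq
      have key : ∀ r : Fin (L+1) → Fin 4 × Fin 4, (∀ ℓ, (r ℓ).1 < (r ℓ).2) →
          c (fun ℓ => ((Fin.cons (ι₀ ∘ f) (fun ℓ => ι' ∘ h' ℓ) : Fin (L+1) → Fin 4 → Fin (max K₀ K')) ℓ (r ℓ).1,
              (Fin.cons (ι₀ ∘ f) (fun ℓ => ι' ∘ h' ℓ) : Fin (L+1) → Fin 4 → Fin (max K₀ K')) ℓ (r ℓ).2))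
            = χ₀ (f (r 0).1) (f (r 0).2) (fun ℓ => (h' ℓ (r ℓ.succ).1, h' ℓ (r ℓ.succ).2)) := by
        intro r hr
        rw [hχ₀]
        congr 1
        funext ℓ
        rcases Fin.eq_zero_or_eq_succ ℓ with rfl | ⟨ℓ', rfl⟩
        · simp
        · simp
      rw [key p hp, key q hq]
      rw [hγ _ _ (hp 0), hγ _ _ (hq 0)]
      exact h'prop (fun ℓ => (p ℓ.succ)) (fun ℓ => (q ℓ.succ)) (fun ℓ => hp ℓ.succ) (fun ℓ => hq ℓ.succ)

universe u

/-- Canonical product (grid) theorem: every coloring of `[K]^L` with arbitrarily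
many colors admits a combinatorial box on which the coloring is canonical. -/
private lemma gridCanonical (L : ℕ) :
    ∃ K : ℕ, 0 < K ∧ ∀ (α : Type u) (χ : (Fin L → Fin K) → α),
      ∃ (a b : Fin L → Fin K) (J : Finset (Fin L)),
        (∀ ℓ, a ℓ ≠ b ℓ) ∧
        ∀ g g' : Fin L → Fin K,
          (∀ ℓ, g ℓ = a ℓ ∨ g ℓ = b ℓ) → (∀ ℓ, g' ℓ = a ℓ ∨ g' ℓ = b ℓ) →
          (χ g = χ g' ↔ ∀ j ∈ J, g j = g' j) := by
  classical
  obtain ⟨K, hKpos, hKprop⟩ :=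
    prodRamsey L ((Fin L → Bool) → (Fin L → Bool) → Bool)
  refine ⟨K, hKpos, fun α χ => ?_⟩
  set c : (Fin L → Fin K × Fin K) → ((Fin L → Bool) → (Fin L → Bool) → Bool) :=
    fun B u v => decide (χ (fun ℓ => if u ℓ then (B ℓ).2 else (B ℓ).1)
      = χ (fun ℓ => if v ℓ then (B ℓ).2 else (B ℓ).1)) with hc
  obtain ⟨h, hmono, hconst⟩ := hKprop c
  -- pick a point of the box given by pair-tuple p and boolean vector u
  set pick : (Fin L → Fin 4 × Fin 4) → (Fin L → Bool) → (Fin L → Fin K) :=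
    fun p u ℓ => h ℓ (if u ℓ then (p ℓ).2 else (p ℓ).1) with hpick
  have Pat : ∀ p q : Fin L → Fin 4 × Fin 4,
      (∀ ℓ, (p ℓ).1 < (p ℓ).2) → (∀ ℓ, (q ℓ).1 < (q ℓ).2) →
      ∀ u v : Fin L → Bool,
      (χ (pick p u) = χ (pick p v) ↔ χ (pick q u) = χ (pick q v)) := by
    intro p q hp hq u v
    have := hconst p q hp hq
    have happ := congrFun (congrFun this u) v
    rw [hc] at happ
    simp only [decide_eq_decide] at happ
    have e1 : ∀ (r : Fin L → Fin 4 × Fin 4) (w : Fin L → Bool),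
        (fun ℓ => if w ℓ then ((fun ℓ => (h ℓ (r ℓ).1, h ℓ (r ℓ).2)) ℓ).2
          else ((fun ℓ => (h ℓ (r ℓ).1, h ℓ (r ℓ).2)) ℓ).1) = pick r w := by
      intro r w
      funext ℓ
      rw [hpick]
      by_cases hw : w ℓ <;> simp [hw]
    rw [e1 p u, e1 p v, e1 q u, e1 q v] at happ
    exact happ
  set a : Fin L → Fin K := fun ℓ => h ℓ 1 with hadef
  set b : Fin L → Fin K := fun ℓ => h ℓ 2 with hbdef
  have hab : ∀ ℓ, a ℓ ≠ b ℓ := by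
    intro ℓ
    exact ne_of_lt (hmono ℓ (by decide : (1 : Fin 4) < 2))
  set boxpt : (Fin L → Bool) → (Fin L → Fin K) := fun g ℓ => if g ℓ then b ℓ else a ℓ
    with hboxpt
  set bchi : (Fin L → Bool) → α := fun g => χ (boxpt g) with hbchi
  set base : Fin L → Bool := fun _ => false with hbase
  set J : Finset (Fin L) :=
    Finset.univ.filter (fun j => ¬ (bchi (Function.update base j true) = bchi base))
    with hJ
  -- basic: boxpt g = pick (constant (1,2)) g
  have hboxpick : ∀ g : Fin L → Bool, boxpt g = pick (fun _ => ((1 : Fin 4), (2 : Fin 4))) g := by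
    intro g
    funext ℓ
    rw [hboxpt, hpick]
    by_cases hg : g ℓ <;> simp [hg, hadef, hbdef]
  -- Fact 1 : flipping a coordinate not in J does not change the color
  have fact1 : ∀ (j : Fin L) (g : Fin L → Bool), j ∉ J →
      bchi (Function.update g j false) = bchi (Function.update g j true) := by
    intro j g hj
    have hjq : bchi (Function.update base j true) = bchi base := by
      rw [hJ] at hj
      simp only [Finset.mem_filter, Finset.mem_univ, true_and, not_not] at hj
      exact hj
    set p : Fin L → Fin 4 × Fin 4 := fun ℓ =>
      if ℓ = j then ((1 : Fin 4), (2 : Fin 4))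
      else ((if g ℓ then (2 : Fin 4) else 1), (3 : Fin 4)) with hp
    set q : Fin L → Fin 4 × Fin 4 := fun ℓ =>
      if ℓ = j then ((1 : Fin 4), (2 : Fin 4)) else ((1 : Fin 4), (3 : Fin 4)) with hq
    have hpord : ∀ ℓ, (p ℓ).1 < (p ℓ).2 := by
      intro ℓ
      rw [hp]
      by_cases hℓ : ℓ = j <;> by_cases hg : g ℓ <;> simp [hℓ, hg] <;> decide
    have hqord : ∀ ℓ, (q ℓ).1 < (q ℓ).2 := by
      intro ℓ
      rw [hq]
      by_cases hℓ : ℓ = j <;> simp [hℓ] <;> decide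
    set u : Fin L → Bool := fun _ => false with hu
    set v : Fin L → Bool := Function.update u j true with hv
    have e1 : pick p u = boxpt (Function.update g j false) := by
      funext ℓ
      rw [hpick, hboxpt, hp]
      by_cases hℓ : ℓ = j
      · subst hℓ; simp [hu, Function.update_self, hadef]
      · by_cases hg : g ℓ <;>
          simp [hℓ, hg, hu, Function.update_of_ne hℓ, hadef, hbdef]
    have e2 : pick p v = boxpt (Function.update g j true) := by
      funext ℓ
      rw [hpick, hboxpt, hp, hv]
      by_cases hℓ : ℓ = j
      · subst hℓ; simp [hu, Function.update_self, hbdef]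
      · by_cases hg : g ℓ <;>
          simp [hℓ, hg, hu, Function.update_of_ne hℓ, hadef, hbdef]
    have e3 : pick q u = boxpt base := by
      funext ℓ
      rw [hpick, hboxpt, hq, hbase]
      by_cases hℓ : ℓ = j <;> simp [hℓ, hu, hadef]
    have e4 : pick q v = boxpt (Function.update base j true) := by
      funext ℓ
      rw [hpick, hboxpt, hq, hv]
      by_cases hℓ : ℓ = j
      · subst hℓ; simp [hu, Function.update_self, hbdef]
      · simp [hℓ, hu, Function.update_of_ne hℓ, hadef, hbase]
    have := Pat p q hpord hqord u v
    rw [e1, e2, e3, e4] at this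
    exact this.mpr hjq.symm
  -- Fact 2 : points agreeing on J get the same color
  have fact2 : ∀ (n : ℕ) (g g' : Fin L → Bool), (∀ j ∈ J, g j = g' j) →
      (Finset.univ.filter (fun ℓ => g ℓ ≠ g' ℓ)).card ≤ n → bchi g = bchi g' := by
    intro n
    induction n with
    | zero =>
      intro g g' _ hcard
      have : g = g' := by
        funext ℓ
        by_contra hne
        have : ℓ ∈ Finset.univ.filter (fun ℓ => g ℓ ≠ g' ℓ) := by
          simp [hne]
        have := Finset.card_pos.mpr ⟨ℓ, this⟩
        omega
      rw [this]
    | succ n ih =>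
      intro g g' hagree hcard
      rcases Finset.eq_empty_or_nonempty (Finset.univ.filter (fun ℓ => g ℓ ≠ g' ℓ)) with hD | hD
      · have : g = g' := by
          funext ℓ
          by_contra hne
          have : ℓ ∈ Finset.univ.filter (fun ℓ => g ℓ ≠ g' ℓ) := by simp [hne]
          rw [hD] at this
          exact absurd this (Finset.notMem_empty ℓ)
        rw [this]
      · obtain ⟨j, hjD⟩ := hD
        simp only [Finset.mem_filter, Finset.mem_univ, true_and] at hjD
        have hjJ : j ∉ J := fun hjJ => hjD (hagree j hjJ)
        set g'' : Fin L → Bool := Function.update g' j (g j) with hg''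
        have step : bchi g'' = bchi g' := by
          have h01 := fact1 j g' hjJ
          cases hgj : g j with
          | false =>
            have hg'j : g' j = true := by
              cases hg'j : g' j with
              | false => exact absurd (by rw [hgj, hg'j]) hjD
              | true => rfl
            have egp : g' = Function.update g' j true := by
              funext ℓ
              by_cases hℓ : ℓ = j
              · subst hℓ; simp [Function.update_self, hg'j]
              · simp [Function.update_of_ne hℓ]
            rw [hg'', hgj]
            rw [egp]
            rw [Function.update_idem]
            exact h01
          | true =>
            have hg'j : g' j = false := by
              cases hg'j : g' j with
              | true => exact absurd (by rw [hgj, hg'j]) hjD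
              | false => rfl
            have egp : g' = Function.update g' j false := by
              funext ℓ
              by_cases hℓ : ℓ = j
              · subst hℓ; simp [Function.update_self, hg'j]
              · simp [Function.update_of_ne hℓ]
            rw [hg'', hgj]
            conv_rhs => rw [egp]
            exact h01.symm
        have hagree2 : ∀ j' ∈ J, g j' = g'' j' := by
          intro j' hj'
          by_cases hℓ : j' = j
          · subst hℓ; simp [hg'', Function.update_self]
          · rw [hg'', Function.update_of_ne hℓ]
            exact hagree j' hj'
        have hsub : (Finset.univ.filter (fun ℓ => g ℓ ≠ g'' ℓ))
            ⊆ (Finset.univ.filter (fun ℓ => g ℓ ≠ g' ℓ)).erase j := by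
          intro ℓ hℓ
          simp only [Finset.mem_filter, Finset.mem_univ, true_and] at hℓ
          rw [Finset.mem_erase]
          constructor
          · intro hlj
            subst hlj
            exact hℓ (by simp [hg'', Function.update_self])
          · simp only [Finset.mem_filter, Finset.mem_univ, true_and]
            intro heq
            apply hℓ
            rw [heq]
            by_cases hlj : ℓ = j
            · subst hlj; simp [hg'', Function.update_self, heq.symm]
            · simp [hg'', Function.update_of_ne hlj]
        have hcard2 : (Finset.univ.filter (fun ℓ => g ℓ ≠ g'' ℓ)).card ≤ n := by
          have h1 := Finset.card_le_card hsub
          have h2 : ((Finset.univ.filter (fun ℓ => g ℓ ≠ g' ℓ)).erase j).card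
              = (Finset.univ.filter (fun ℓ => g ℓ ≠ g' ℓ)).card - 1 :=
            Finset.card_erase_of_mem (by simp [hjD])
          omega
        rw [← step]
        exact ih g g'' hagree2 hcard2
  -- a helper for the base box
  have ebase : ∀ (j : Fin L) (q2 : Fin L → Fin 4 × Fin 4),
      q2 = (fun ℓ => if ℓ = j then ((1 : Fin 4), (2 : Fin 4)) else ((1 : Fin 4), (3 : Fin 4))) →
      pick q2 base = boxpt base ∧
      pick q2 (Function.update base j true) = boxpt (Function.update base j true) := by
    intro j q2 hq2
    constructor
    · funext ℓ
      by_cases hℓ : ℓ = j <;>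
        simp [hpick, hboxpt, hq2, hbase, hℓ, hadef]
    · funext ℓ
      by_cases hℓ : ℓ = j
      · subst hℓ
        simp [hpick, hboxpt, hq2, hbase, Function.update_self, hbdef]
      · simp [hpick, hboxpt, hq2, hbase, hℓ, Function.update_of_ne hℓ, hadef]
  -- Fact 3 : if colors agree then the points agree on J
  have fact3 : ∀ g g' : Fin L → Bool, bchi g = bchi g' → ∀ j ∈ J, g j = g' j := by
    intro g g' hchi j hjJ
    by_contra hne
    set gt : Fin L → Bool := fun ℓ => if ℓ ∈ J then g' ℓ else g ℓ with hgt
    have h2 : bchi g' = bchi gt := by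
      apply fact2 (Finset.univ.filter (fun ℓ => g' ℓ ≠ gt ℓ)).card g' gt _ le_rfl
      intro j' hj'
      rw [hgt]
      simp [hj']
    have hgg : bchi g = bchi gt := hchi.trans h2
    have hgtj : gt j = g' j := by rw [hgt]; simp [hjJ]
    have hgtjval : gt j = (!(g j)) := by
      rw [hgtj]
      cases hgj : g j with
      | false =>
        cases hg'j : g' j with
        | false => exact absurd (by rw [hgj, hg'j]) hne
        | true => rfl
      | true =>
        cases hg'j : g' j with
        | true => exact absurd (by rw [hgj, hg'j]) hne
        | false => rfl
    have hJne : ¬ (bchi (Function.update base j true) = bchi base) := by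
      rw [hJ] at hjJ
      simp only [Finset.mem_filter, Finset.mem_univ, true_and] at hjJ
      exact hjJ
    have hbchig : bchi g = χ (boxpt g) := rfl
    have hbchigt : bchi gt = χ (boxpt gt) := rfl
    cases hgj : g j with
    | true =>
      have hgtj0 : gt j = false := by rw [hgtjval, hgj]; rfl
      set q : Fin L → Fin 4 × Fin 4 := fun ℓ =>
        if ℓ = j then ((0 : Fin 4), (2 : Fin 4)) else ((1 : Fin 4), (2 : Fin 4)) with hq
      have hqord : ∀ ℓ, (q ℓ).1 < (q ℓ).2 := by
        intro ℓ
        by_cases hℓ : ℓ = j <;> simp only [hq, hℓ, if_true, if_false] <;> decide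
      have hqg : pick q g = boxpt g := by
        funext ℓ
        by_cases hℓ : ℓ = j
        · subst hℓ; simp [hpick, hboxpt, hq, hgj, hbdef]
        · cases hgℓ : g ℓ <;> simp [hpick, hboxpt, hq, hℓ, hgℓ, hadef, hbdef]
      have claimA := Pat (fun _ => ((1 : Fin 4), (2 : Fin 4))) q
        (fun ℓ => show (1 : Fin 4) < 2 by decide) hqord g gt
      rw [← hboxpick g, ← hboxpick gt, hqg] at claimA
      have hzg : χ (boxpt g) = χ (pick q gt) := by
        apply claimA.mp
        rw [hbchig, hbchigt] at hgg
        exact hgg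
      have hgtz : χ (boxpt gt) = χ (pick q gt) := by
        rw [hbchig, hbchigt] at hgg
        exact hgg.symm.trans hzg
      -- now compare (pick q gt, boxpt gt) with the base pair
      set p2 : Fin L → Fin 4 × Fin 4 := fun ℓ =>
        if ℓ = j then ((0 : Fin 4), (1 : Fin 4))
        else ((if gt ℓ then (2 : Fin 4) else 1), (3 : Fin 4)) with hp2
      set q2 : Fin L → Fin 4 × Fin 4 := fun ℓ =>
        if ℓ = j then ((1 : Fin 4), (2 : Fin 4)) else ((1 : Fin 4), (3 : Fin 4)) with hq2
      have hp2ord : ∀ ℓ, (p2 ℓ).1 < (p2 ℓ).2 := by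
        intro ℓ
        by_cases hℓ : ℓ = j <;> by_cases hgt : gt ℓ <;>
          simp only [hp2, hℓ, hgt, if_true, if_false] <;> decide
      have hq2ord : ∀ ℓ, (q2 ℓ).1 < (q2 ℓ).2 := by
        intro ℓ
        by_cases hℓ : ℓ = j <;> simp only [hq2, hℓ, if_true, if_false] <;> decide
      have e1 : pick p2 base = pick q gt := by
        funext ℓ
        by_cases hℓ : ℓ = j
        · subst hℓ; simp [hpick, hp2, hq, hbase, hgtj0]
        · cases hgtℓ : gt ℓ <;> simp [hpick, hp2, hq, hbase, hℓ, hgtℓ]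
      have e2 : pick p2 (Function.update base j true) = boxpt gt := by
        funext ℓ
        by_cases hℓ : ℓ = j
        · subst hℓ
          simp [hpick, hboxpt, hp2, Function.update_self, hgtj0, hadef]
        · cases hgtℓ : gt ℓ <;>
            simp [hpick, hboxpt, hp2, hℓ, Function.update_of_ne hℓ, hbase, hgtℓ, hadef, hbdef]
      obtain ⟨e3, e4⟩ := ebase j q2 rfl
      have claimB := Pat p2 q2 hp2ord hq2ord base (Function.update base j true)
      rw [e1, e2, e3, e4] at claimB
      exact hJne (claimB.mp hgtz.symm).symm
    | false =>
      have hgtj0 : gt j = true := by rw [hgtjval, hgj]; rfl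
      set q : Fin L → Fin 4 × Fin 4 := fun ℓ =>
        if ℓ = j then ((1 : Fin 4), (3 : Fin 4)) else ((1 : Fin 4), (2 : Fin 4)) with hq
      have hqord : ∀ ℓ, (q ℓ).1 < (q ℓ).2 := by
        intro ℓ
        by_cases hℓ : ℓ = j <;> simp only [hq, hℓ, if_true, if_false] <;> decide
      have hqg : pick q g = boxpt g := by
        funext ℓ
        by_cases hℓ : ℓ = j
        · subst hℓ; simp [hpick, hboxpt, hq, hgj, hadef]
        · cases hgℓ : g ℓ <;> simp [hpick, hboxpt, hq, hℓ, hgℓ, hadef, hbdef]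
      have claimA := Pat (fun _ => ((1 : Fin 4), (2 : Fin 4))) q
        (fun ℓ => show (1 : Fin 4) < 2 by decide) hqord g gt
      rw [← hboxpick g, ← hboxpick gt, hqg] at claimA
      have hzg : χ (boxpt g) = χ (pick q gt) := by
        apply claimA.mp
        rw [hbchig, hbchigt] at hgg
        exact hgg
      have hgtz : χ (boxpt gt) = χ (pick q gt) := by
        rw [hbchig, hbchigt] at hgg
        exact hgg.symm.trans hzg
      set p2 : Fin L → Fin 4 × Fin 4 := fun ℓ =>
        if ℓ = j then ((2 : Fin 4), (3 : Fin 4))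
        else ((if gt ℓ then (2 : Fin 4) else 1), (3 : Fin 4)) with hp2
      set q2 : Fin L → Fin 4 × Fin 4 := fun ℓ =>
        if ℓ = j then ((1 : Fin 4), (2 : Fin 4)) else ((1 : Fin 4), (3 : Fin 4)) with hq2
      have hp2ord : ∀ ℓ, (p2 ℓ).1 < (p2 ℓ).2 := by
        intro ℓ
        by_cases hℓ : ℓ = j <;> by_cases hgt : gt ℓ <;>
          simp only [hp2, hℓ, hgt, if_true, if_false] <;> decide
      have hq2ord : ∀ ℓ, (q2 ℓ).1 < (q2 ℓ).2 := by
        intro ℓ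
        by_cases hℓ : ℓ = j <;> simp only [hq2, hℓ, if_true, if_false] <;> decide
      have e1 : pick p2 base = boxpt gt := by
        funext ℓ
        by_cases hℓ : ℓ = j
        · subst hℓ; simp [hpick, hboxpt, hp2, hbase, hgtj0, hbdef]
        · cases hgtℓ : gt ℓ <;>
            simp [hpick, hboxpt, hp2, hbase, hℓ, hgtℓ, hadef, hbdef]
      have e2 : pick p2 (Function.update base j true) = pick q gt := by
        funext ℓ
        by_cases hℓ : ℓ = j
        · subst hℓ
          simp [hpick, hp2, hq, Function.update_self, hgtj0]
        · cases hgtℓ : gt ℓ <;>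
            simp [hpick, hp2, hq, hℓ, Function.update_of_ne hℓ, hbase, hgtℓ]
      obtain ⟨e3, e4⟩ := ebase j q2 rfl
      have claimB := Pat p2 q2 hp2ord hq2ord base (Function.update base j true)
      rw [e1, e2, e3, e4] at claimB
      exact hJne (claimB.mp hgtz).symm
  -- conclusion
  refine ⟨a, b, J, hab, ?_⟩
  intro g g' hg hg'
  set gb : Fin L → Bool := fun ℓ => decide (g ℓ = b ℓ) with hgb
  set gb' : Fin L → Bool := fun ℓ => decide (g' ℓ = b ℓ) with hgb'
  have hgbox : boxpt gb = g := by
    funext ℓ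
    rcases hg ℓ with hgl | hgl
    · have : gb ℓ = false := by
        simp only [hgb, decide_eq_false_iff_not]
        rw [hgl]
        exact hab ℓ
      simp [hboxpt, this, hgl]
    · have : gb ℓ = true := by simp [hgb, hgl]
      simp [hboxpt, this, hgl]
  have hgbox' : boxpt gb' = g' := by
    funext ℓ
    rcases hg' ℓ with hgl | hgl
    · have : gb' ℓ = false := by
        simp only [hgb', decide_eq_false_iff_not]
        rw [hgl]
        exact hab ℓ
      simp [hboxpt, this, hgl]
    · have : gb' ℓ = true := by simp [hgb', hgl]
      simp [hboxpt, this, hgl]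
  have hval : ∀ ℓ, (gb ℓ = gb' ℓ) ↔ (g ℓ = g' ℓ) := by
    intro ℓ
    constructor
    · intro hb
      have := congrFun hgbox ℓ
      have := congrFun hgbox' ℓ
      rcases hg ℓ with h1 | h1 <;> rcases hg' ℓ with h2 | h2
      · rw [h1, h2]
      · exfalso
        have hb1 : gb ℓ = false := by
          simp only [hgb, decide_eq_false_iff_not]; rw [h1]; exact hab ℓ
        have hb2 : gb' ℓ = true := by simp [hgb', h2]
        rw [hb1, hb2] at hb; exact Bool.false_ne_true hb
      · exfalso
        have hb1 : gb ℓ = true := by simp [hgb, h1]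
        have hb2 : gb' ℓ = false := by
          simp only [hgb', decide_eq_false_iff_not]; rw [h2]; exact hab ℓ
        rw [hb1, hb2] at hb; exact Bool.false_ne_true hb.symm
      · rw [h1, h2]
    · intro hgeq
      rw [hgb, hgb']
      simp only [hgeq]
  constructor
  · intro hχ
    intro j hj
    have : bchi gb = bchi gb' := by
      rw [hbchi]
      simp only []
      rw [hgbox, hgbox']
      exact hχ
    exact (hval j).mp (fact3 gb gb' this j hj)
  · intro hagree
    have : bchi gb = bchi gb' := by
      apply fact2 (Finset.univ.filter (fun ℓ => gb ℓ ≠ gb' ℓ)).card gb gb' _ le_rfl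
      intro j hj
      exact (hval j).mpr (hagree j hj)
    rw [hbchi] at this
    simp only [] at this
    rw [hgbox, hgbox'] at this
    exact this

open Finset

-- dist on PiLp 1 is the sum of coordinate distances
private lemma l1dist {k : ℕ} (x y : PiLp 1 fun _ : Fin k => ℝ) :
    dist x y = ∑ i, |x i - y i| := by
  rw [PiLp.dist_eq_sum (p := 1) (by simp)]
  simp [Real.dist_eq, ENNReal.toReal_one, Real.rpow_one]

-- counting lemma for unary encodings
private lemma unary_count (R A B : ℕ) (hA : A ≤ R) (hB : B ≤ R) :
    ((Finset.univ.filter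
      (fun t : Fin R => decide ((t : ℕ) < A) ≠ decide ((t : ℕ) < B))).card : ℝ)
      = |(A : ℝ) - B| := by
  have key : (Finset.univ.filter
      (fun t : Fin R => decide ((t : ℕ) < A) ≠ decide ((t : ℕ) < B))).card
      = max A B - min A B := by
    rw [Finset.card_filter]
    rw [Fin.sum_univ_eq_sum_range (fun t => if decide (t < A) ≠ decide (t < B) then 1 else 0) R]
    rw [← Finset.card_filter]
    have : Finset.filter (fun t => decide (t < A) ≠ decide (t < B)) (Finset.range R)
        = Finset.Ico (min A B) (max A B) := by
      ext t
      simp only [Finset.mem_filter, Finset.mem_range, Finset.mem_Ico, ne_eq,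
        decide_eq_decide]
      constructor
      · rintro ⟨htR, hne⟩
        rcases Nat.lt_or_ge t A with h1 | h1 <;> rcases Nat.lt_or_ge t B with h2 | h2 <;>
          omega
      · intro ⟨h1, h2⟩
        constructor
        · omega
        · intro hiff
          rcases Nat.lt_or_ge t A with hh | hh <;> rcases Nat.lt_or_ge t B with h3 | h3 <;>
            omega
    rw [this, Nat.card_Ico]
  rw [key]
  rcases le_total A B with h | h
  · rw [max_eq_right h, min_eq_left h]
    rw [abs_sub_comm, abs_of_nonneg (sub_nonneg.mpr ((Nat.cast_le (α := ℝ)).mpr h))]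
    push_cast [h]
    ring
  · rw [max_eq_left h, min_eq_right h]
    rw [abs_of_nonneg (sub_nonneg.mpr ((Nat.cast_le (α := ℝ)).mpr h))]
    push_cast [h]
    ring

private lemma cube_encoding (d : ℕ) (hd : 0 < d)
    (M : Set (PiLp 1 fun _ : Fin d => ℝ)) (hM : M.Finite)
    (hrat : ∀ x ∈ M, ∀ i : Fin d, ∃ q : ℚ, x i = (q : ℝ)) (hne : M.Nonempty) :
    ∃ (N : ℕ) (lam : ℝ) (ε : (PiLp 1 fun _ : Fin d => ℝ) → Fin N → Bool),
      0 < lam ∧ ∀ x ∈ M, ∀ y ∈ M,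
        dist x y = lam * ((Finset.univ.filter (fun j => ε x j ≠ ε y j)).card : ℝ) := by
  classical
  set qf : (PiLp 1 fun _ : Fin d => ℝ) → Fin d → ℚ := fun x i => if hx : x ∈ M then (hrat x hx i).choose else 0
    with hqfdef
  have hqf : ∀ x ∈ M, ∀ i, x i = ((qf x i : ℚ) : ℝ) := by
    intro x hx i
    rw [hqfdef]
    simp only [dif_pos hx]
    exact (hrat x hx i).choose_spec
  set F := hM.toFinset with hF
  have hFne : F.Nonempty := by
    obtain ⟨x, hx⟩ := hne
    exact ⟨x, by simp [hF, hx]⟩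
  set Vq : Finset ℚ := (F ×ˢ (Finset.univ : Finset (Fin d))).image
    (fun p => qf p.1 p.2) with hVq
  set D : ℕ := ∏ q ∈ Vq, q.den with hD
  have hDpos : 0 < D := Finset.prod_pos (fun q _ => q.pos)
  have hdvd : ∀ x ∈ M, ∀ i : Fin d, (qf x i).den ∣ D := by
    intro x hx i
    apply Finset.dvd_prod_of_mem
    rw [hVq]
    apply Finset.mem_image.mpr
    exact ⟨(x, i), Finset.mem_product.mpr ⟨by simp [hF, hx], Finset.mem_univ i⟩, rfl⟩
  set m : (PiLp 1 fun _ : Fin d => ℝ) → Fin d → ℤ := fun x i => (qf x i).num * ((D / (qf x i).den : ℕ) : ℤ)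
    with hm
  have hkey : ∀ x ∈ M, ∀ i : Fin d, x i * (D : ℝ) = ((m x i : ℤ) : ℝ) := by
    intro x hx i
    have hq : (qf x i) * (D : ℚ) = ((m x i : ℤ) : ℚ) := by
      have hden : ((qf x i).den : ℚ) * ((D / (qf x i).den : ℕ) : ℚ) = (D : ℚ) := by
        rw [← Nat.cast_mul, Nat.mul_div_cancel' (hdvd x hx i)]
      have hnum : (qf x i) * ((qf x i).den : ℚ) = ((qf x i).num : ℚ) := by
        exact Rat.mul_den_eq_num (qf x i)
      rw [hm]
      push_cast
      calc (qf x i) * (D : ℚ)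
          = (qf x i) * (((qf x i).den : ℚ) * ((D / (qf x i).den : ℕ) : ℚ)) := by rw [hden]
        _ = ((qf x i) * ((qf x i).den : ℚ)) * ((D / (qf x i).den : ℕ) : ℚ) := by ring
        _ = ((qf x i).num : ℚ) * ((D / (qf x i).den : ℕ) : ℚ) := by rw [hnum]
    have := congrArg (fun q : ℚ => (q : ℝ)) hq
    push_cast at this
    rw [hqf x hx i]
    push_cast
    linarith [this]
  -- global integer bounds
  set S : Finset ℤ := (F ×ˢ (Finset.univ : Finset (Fin d))).image (fun p => m p.1 p.2)
    with hS
  have hSne : S.Nonempty := by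
    apply Finset.Nonempty.image
    apply Finset.Nonempty.product hFne
    exact ⟨⟨0, hd⟩, Finset.mem_univ _⟩
  set lo : ℤ := S.min' hSne with hlo
  set hi : ℤ := S.max' hSne with hhi
  have hmem : ∀ x ∈ M, ∀ i : Fin d, m x i ∈ S := by
    intro x hx i
    rw [hS]
    apply Finset.mem_image.mpr
    exact ⟨(x, i), Finset.mem_product.mpr ⟨by simp [hF, hx], Finset.mem_univ i⟩, rfl⟩
  have hbnd : ∀ x ∈ M, ∀ i : Fin d, lo ≤ m x i ∧ m x i ≤ hi := by
    intro x hx i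
    exact ⟨S.min'_le _ (hmem x hx i), S.le_max' _ (hmem x hx i)⟩
  set R : ℕ := (hi - lo).toNat with hR
  set u : (PiLp 1 fun _ : Fin d => ℝ) → Fin d → ℕ := fun x i => (m x i - lo).toNat with hu
  have huR : ∀ x ∈ M, ∀ i, u x i ≤ R := by
    intro x hx i
    obtain ⟨h1, h2⟩ := hbnd x hx i
    simp only [hu, hR]
    omega
  set I := Fin d × Fin R
  set e := Fintype.equivFin I with he
  set N := Fintype.card I with hN
  set ε : (PiLp 1 fun _ : Fin d => ℝ) → Fin N → Bool := fun x j =>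
    decide ((((e.symm j).2 : ℕ)) < u x (e.symm j).1) with hε
  refine ⟨N, (D : ℝ)⁻¹, ε, by positivity, ?_⟩
  intro x hx y hy
  -- transport the Hamming count through the equivalence e
  have hcard : (Finset.univ.filter (fun j : Fin N => ε x j ≠ ε y j)).card
      = (Finset.univ.filter (fun w : I =>
          decide ((w.2 : ℕ) < u x w.1) ≠ decide ((w.2 : ℕ) < u y w.1))).card := by
    apply Finset.card_bij' (fun j _ => e.symm j) (fun w _ => e w)
    · intro j hj
      simp only [Finset.mem_filter, Finset.mem_univ, true_and] at hj ⊢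
      exact hj
    · intro w hw
      simp only [Finset.mem_filter, Finset.mem_univ, true_and, hε] at hw ⊢
      simpa using hw
    · intro j _; simp
    · intro w _; simp
  -- split the count over coordinates
  have hsplit : ((Finset.univ.filter (fun w : I =>
      decide ((w.2 : ℕ) < u x w.1) ≠ decide ((w.2 : ℕ) < u y w.1))).card : ℝ)
      = ∑ i : Fin d, ((Finset.univ.filter (fun t : Fin R =>
          decide ((t : ℕ) < u x i) ≠ decide ((t : ℕ) < u y i))).card : ℝ) := by
    rw [Finset.card_filter]
    push_cast
    rw [Fintype.sum_prod_type]
    congr 1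
    funext i
    rw [Finset.card_filter]
    push_cast
    rfl
  rw [l1dist, hcard, hsplit, Finset.mul_sum]
  apply Finset.sum_congr rfl
  intro i _
  rw [unary_count R (u x i) (u y i) (huR x hx i) (huR y hy i)]
  have hmu : ((m x i : ℤ) : ℝ) - ((m y i : ℤ) : ℝ) = ((u x i : ℕ) : ℝ) - ((u y i : ℕ) : ℝ) := by
    have h1 := (hbnd x hx i).1
    have h2 := (hbnd y hy i).1
    have : (m x i) - (m y i) = ((u x i : ℕ) : ℤ) - ((u y i : ℕ) : ℤ) := by
      simp only [hu]; omega
    exact_mod_cast congrArg (fun z : ℤ => (z : ℝ)) this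
  have hxy : x i - y i = (D : ℝ)⁻¹ * (((m x i : ℤ) : ℝ) - ((m y i : ℤ) : ℝ)) := by
    have k1 := hkey x hx i
    have k2 := hkey y hy i
    have hD0 : (D : ℝ) ≠ 0 := by positivity
    field_simp
    linarith [k1, k2]
  rw [hxy, hmu, abs_mul]
  rw [abs_of_nonneg (by positivity : (0:ℝ) ≤ (D:ℝ)⁻¹)]

/- Here `PiLp 1 (fun _ : Fin k => ℝ)` is `ℝ^k` with the `ℓ₁` (Manhattan) norm. -/

/-- For every finite `M ⊂ ℝ^d` with rational coordinates (taxicab norm), there exists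
`n` such that every coloring of `ℝⁿ` with the `ℓ₁` norm, with an arbitrary set of
colors, contains an `ℓ₁`-isometric copy of `M` that is either monochromatic or
rainbow. -/
theorem manhattan_rational_mono_or_rainbow (d : ℕ) (hd : 0 < d)
    (M : Set (PiLp 1 fun _ : Fin d => ℝ)) (hM : M.Finite)
    (hrat : ∀ x ∈ M, ∀ i : Fin d, ∃ q : ℚ, x i = (q : ℝ)) :
    ∃ n : ℕ, 0 < n ∧
      ∀ (α : Type*) (χ : (PiLp 1 fun _ : Fin n => ℝ) → α),
        ∃ f : (PiLp 1 fun _ : Fin d => ℝ) → (PiLp 1 fun _ : Fin n => ℝ),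
          Set.InjOn f M ∧
          (∀ x ∈ M, ∀ y ∈ M, dist (f x) (f y) = dist x y) ∧
          ((∀ x ∈ M, ∀ y ∈ M, χ (f x) = χ (f y)) ∨
            (∀ x ∈ M, ∀ y ∈ M, χ (f x) = χ (f y) → x = y)) := by
  classical
  by_cases htriv : ∀ x ∈ M, ∀ y ∈ M, x = y
  · refine ⟨1, one_pos, fun α χ => ⟨fun _ => 0, ?_, ?_, Or.inl ?_⟩⟩
    · intro x hx y hy _
      exact htriv x hx y hy
    · intro x hx y hy
      rw [htriv x hx y hy]
      simp
    · intro x hx y hy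
      rw [htriv x hx y hy]
  · push_neg at htriv
    obtain ⟨x₀, hx₀, y₀, hy₀, hxy0⟩ := htriv
    have hne : M.Nonempty := ⟨x₀, hx₀⟩
    obtain ⟨N, lam, ε, hlam, hdist⟩ := cube_encoding d hd M hM hrat hne
    have hNpos : 0 < N := by
      have h0 := hdist x₀ hx₀ y₀ hy₀
      have hd0 : dist x₀ y₀ ≠ 0 := dist_ne_zero.mpr hxy0
      rw [h0] at hd0
      have hcne : (Finset.univ.filter (fun j => ε x₀ j ≠ ε y₀ j)).Nonempty := by
        rw [← Finset.card_pos]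
        rcases Nat.eq_zero_or_pos (Finset.univ.filter (fun j => ε x₀ j ≠ ε y₀ j)).card
          with h | h
        · rw [h] at hd0
          simp at hd0
        · exact h
      obtain ⟨j, _⟩ := hcne
      exact j.pos
    set L := 2 * N with hL
    obtain ⟨K, hKpos, hKprop⟩ := gridCanonical L
    set n := Fintype.card (Fin L × Fin K) with hn
    have hnpos : 0 < n :=
      Fintype.card_pos_iff.mpr ⟨(⟨0, by omega⟩, ⟨0, hKpos⟩)⟩
    set e := Fintype.equivFin (Fin L × Fin K) with he
    set Φ : (Fin L → Fin K) → (PiLp 1 fun _ : Fin n => ℝ) := fun g =>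
      WithLp.toLp 1 (fun j => if (e.symm j).2 = g (e.symm j).1 then lam / 2 else 0) with hΦ
    have hinner : ∀ gk g'k : Fin K,
        (∑ k : Fin K, |(if k = gk then lam / 2 else 0) - (if k = g'k then lam / 2 else 0)|)
          = if gk = g'k then 0 else lam := by
      intro gk g'k
      by_cases hgg : gk = g'k
      · subst hgg
        simp
      · rw [if_neg hgg]
        have hstep : ∀ k : Fin K,
            |(if k = gk then lam / 2 else 0) - (if k = g'k then lam / 2 else 0)|
              = (if k = gk then lam / 2 else 0) + (if k = g'k then lam / 2 else 0) := by
          intro k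
          by_cases h1 : k = gk
          · have h2 : ¬ (k = g'k) := by rw [h1]; exact hgg
            rw [if_pos h1, if_neg h2, sub_zero, abs_of_nonneg (by linarith), add_zero]
          · by_cases h2 : k = g'k
            · rw [if_neg h1, if_pos h2, zero_sub, abs_neg, abs_of_nonneg (by linarith),
                zero_add]
            · rw [if_neg h1, if_neg h2]
              simp
        rw [Finset.sum_congr rfl (fun k _ => hstep k), Finset.sum_add_distrib]
        rw [Finset.sum_ite_eq' Finset.univ gk (fun _ => lam / 2),
          Finset.sum_ite_eq' Finset.univ g'k (fun _ => lam / 2)]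
        simp only [Finset.mem_univ, if_true]
        ring
    have hΦdist : ∀ g g' : Fin L → Fin K, dist (Φ g) (Φ g')
        = lam * ((Finset.univ.filter (fun ℓ => g ℓ ≠ g' ℓ)).card : ℝ) := by
      intro g g'
      rw [l1dist]
      have hre : (∑ j : Fin n, |Φ g j - Φ g' j|)
          = ∑ w : Fin L × Fin K, |(if w.2 = g w.1 then lam / 2 else 0)
              - (if w.2 = g' w.1 then lam / 2 else 0)| := by
        rw [← Equiv.sum_comp e.symm (fun w : Fin L × Fin K =>
          |(if w.2 = g w.1 then lam / 2 else 0) - (if w.2 = g' w.1 then lam / 2 else 0)|)]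
      rw [hre, Fintype.sum_prod_type]
      have hc1 : ∀ ℓ : Fin L, (∑ k : Fin K, |(if k = g ℓ then lam / 2 else 0)
          - (if k = g' ℓ then lam / 2 else 0)|) = if g ℓ = g' ℓ then 0 else lam :=
        fun ℓ => hinner (g ℓ) (g' ℓ)
      rw [Finset.sum_congr rfl (fun ℓ _ => hc1 ℓ)]
      have hc2 : (∑ ℓ : Fin L, if g ℓ = g' ℓ then (0:ℝ) else lam)
          = ∑ ℓ : Fin L, lam * (if g ℓ ≠ g' ℓ then 1 else 0) := by
        apply Finset.sum_congr rfl
        intro ℓ _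
        by_cases h : g ℓ = g' ℓ <;> simp [h]
      rw [hc2, ← Finset.mul_sum]
      congr 1
      rw [Finset.sum_boole]
    refine ⟨n, hnpos, fun α χ => ?_⟩
    obtain ⟨a, b, J, hab, hcanon⟩ := hKprop α (fun g => χ (Φ g))
    have hcards : J.card + (Finset.univ \ J).card = L := by
      rw [Finset.card_sdiff_of_subset (Finset.subset_univ J), Finset.card_univ, Fintype.card_fin]
      have := Finset.card_le_card (Finset.subset_univ J)
      rw [Finset.card_univ, Fintype.card_fin] at this
      omega
    have hchoice : (N ≤ (Finset.univ \ J).card) ∨ (N ≤ J.card) := by omega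
    -- common construction given a set of N active blocks
    have key : ∀ T : Finset (Fin L), T.card = N →
        ∃ G : (PiLp 1 fun _ : Fin d => ℝ) → Fin L → Fin K,
          (∀ x ℓ, G x ℓ = a ℓ ∨ G x ℓ = b ℓ) ∧
          (∀ x ℓ, ℓ ∉ T → G x ℓ = a ℓ) ∧
          (∀ x ∈ M, ∀ y ∈ M, dist (Φ (G x)) (Φ (G y)) = dist x y) ∧
          (∀ x ∈ M, ∀ y ∈ M, (∀ ℓ ∈ T, G x ℓ = G y ℓ) → x = y) := by
      intro T hT
      set β : Fin N → Fin L := fun i => ((T.orderIsoOfFin hT) i : Fin L) with hβ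
      have hβmem : ∀ i, β i ∈ T := fun i => ((T.orderIsoOfFin hT) i).2
      have hβinj : Function.Injective β := by
        intro i j hij
        have : (T.orderIsoOfFin hT) i = (T.orderIsoOfFin hT) j := Subtype.ext hij
        exact (T.orderIsoOfFin hT).injective this
      set G : (PiLp 1 fun _ : Fin d => ℝ) → Fin L → Fin K := fun x ℓ =>
        if h : ∃ i, β i = ℓ then (if ε x h.choose then b ℓ else a ℓ) else a ℓ with hG
      have hGβ : ∀ x i, G x (β i) = (if ε x i then b (β i) else a (β i)) := by
        intro x i
        have hex : ∃ i', β i' = β i := ⟨i, rfl⟩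
        simp only [hG, dif_pos hex]
        have : hex.choose = i := hβinj hex.choose_spec
        rw [this]
      have hGbox : ∀ x ℓ, G x ℓ = a ℓ ∨ G x ℓ = b ℓ := by
        intro x ℓ
        by_cases h : ∃ i, β i = ℓ
        · simp only [hG, dif_pos h]
          by_cases hε : ε x h.choose
          · right; rw [if_pos hε]
          · left; rw [if_neg hε]
        · simp only [hG, dif_neg h]
          exact Or.inl trivial
      have hGout : ∀ x ℓ, ℓ ∉ T → G x ℓ = a ℓ := by
        intro x ℓ hℓ
        have hno : ¬ ∃ i, β i = ℓ := by
          rintro ⟨i, rfl⟩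
          exact hℓ (hβmem i)
        simp only [hG, dif_neg hno]
      have hGdiff : ∀ x y, (Finset.univ.filter (fun ℓ => G x ℓ ≠ G y ℓ))
          = (Finset.univ.filter (fun i => ε x i ≠ ε y i)).image β := by
        intro x y
        ext ℓ
        simp only [Finset.mem_filter, Finset.mem_univ, true_and, Finset.mem_image]
        constructor
        · intro hℓ
          have hex : ∃ i, β i = ℓ := by
            by_contra hc
            rw [hG] at hℓ
            simp only [dif_neg hc] at hℓ
            exact hℓ rfl
          obtain ⟨i, rfl⟩ := hex
          refine ⟨i, ⟨?_, rfl⟩⟩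
          rw [hGβ x i, hGβ y i] at hℓ
          intro hee
          rw [hee] at hℓ
          exact hℓ rfl
        · rintro ⟨i, hi, rfl⟩
          rw [hGβ x i, hGβ y i]
          cases hex : ε x i with
          | true =>
            have hey : ε y i = false := by
              cases hey : ε y i with
              | true => exact absurd (by rw [hex, hey]) hi
              | false => rfl
            rw [hey]
            simp only [if_true, Bool.false_eq_true, if_false]
            exact fun hc => (hab (β i)) hc.symm
          | false =>
            have hey : ε y i = true := by
              cases hey : ε y i with
              | false => exact absurd (by rw [hex, hey]) hi
              | true => rfl
            rw [hey]
            simp only [if_true, Bool.false_eq_true, if_false]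
            exact fun hc => (hab (β i)) hc
      have hGdist : ∀ x ∈ M, ∀ y ∈ M, dist (Φ (G x)) (Φ (G y)) = dist x y := by
        intro x hx y hy
        rw [hΦdist, hGdiff x y, Finset.card_image_of_injective _ hβinj,
          hdist x hx y hy]
      refine ⟨G, hGbox, hGout, hGdist, ?_⟩
      intro x hx y hy hagree
      have hεeq : ∀ i, ε x i = ε y i := by
        intro i
        have := hagree (β i) (hβmem i)
        rw [hGβ x i, hGβ y i] at this
        cases hex : ε x i with
        | true =>
          cases hey : ε y i with
          | true => rfl
          | false =>
            rw [hex, hey] at this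
            simp only [if_true, Bool.false_eq_true, if_false] at this
            exact absurd this.symm (hab (β i))
        | false =>
          cases hey : ε y i with
          | false => rfl
          | true =>
            rw [hex, hey] at this
            simp only [if_true, Bool.false_eq_true, if_false] at this
            exact absurd this (hab (β i))
      have : dist x y = 0 := by
        rw [hdist x hx y hy]
        have : (Finset.univ.filter (fun j => ε x j ≠ ε y j)) = ∅ := by
          apply Finset.filter_eq_empty_iff.mpr
          intro j _
          simp only [ne_eq, not_not]
          exact hεeq j
        rw [this]
        simp
      exact dist_eq_zero.mp this
    rcases hchoice with hcase | hcase
    · -- monochromatic case: active blocks avoid J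
      obtain ⟨T, hTsub, hTcard⟩ := Finset.exists_subset_card_eq hcase
      obtain ⟨G, hGbox, hGout, hGdist, hGsep⟩ := key T hTcard
      refine ⟨fun x => Φ (G x), ?_, fun x hx y hy => hGdist x hx y hy, Or.inl ?_⟩
      · intro x hx y hy hf
        have hf' : Φ (G x) = Φ (G y) := hf
        have : dist x y = 0 := by
          rw [← hGdist x hx y hy, hf', dist_self]
        exact dist_eq_zero.mp this
      · intro x hx y hy
        apply (hcanon (G x) (G y) (hGbox x) (hGbox y)).mpr
        intro j hjJ
        have hjT : j ∉ T := by
          intro hjT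
          have := hTsub hjT
          rw [Finset.mem_sdiff] at this
          exact this.2 hjJ
        rw [hGout x j hjT, hGout y j hjT]
    · -- rainbow case: active blocks inside J
      obtain ⟨T, hTsub, hTcard⟩ := Finset.exists_subset_card_eq hcase
      obtain ⟨G, hGbox, hGout, hGdist, hGsep⟩ := key T hTcard
      refine ⟨fun x => Φ (G x), ?_, fun x hx y hy => hGdist x hx y hy, Or.inr ?_⟩
      · intro x hx y hy hf
        have hf' : Φ (G x) = Φ (G y) := hf
        have : dist x y = 0 := by
          rw [← hGdist x hx y hy, hf', dist_self]
        exact dist_eq_zero.mp this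
      · intro x hx y hy hχ
        have := (hcanon (G x) (G y) (hGbox x) (hGbox y)).mp hχ
        exact hGsep x hx y hy (fun ℓ hℓ => this ℓ (hTsub hℓ))
end

section
/- Let a and b be positive reals such that (b/a)² is rational. Then there exists a positive integer n such that for every coloring of n-dimensional Euclidean space with an arbitrary set of colors, there exists an isometric copy of the vertex set {(0,0), (a,0), (0,b), (a,b)} ⊂ ℝ² of an a × b rectangle in ℝⁿ that is either monochromatic or rainbow. -/
namespace RectCanon

open Finset

lemma ramsey_chain (Cb : ℕ) : ∀ (L : ℕ), ∃ R : ℕ, 0 < R ∧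
    ∀ {β : Type} [DecidableEq β] (𝒞 : Finset β), 𝒞.card ≤ Cb → 𝒞.Nonempty →
    ∀ (V : Finset ℕ), R ≤ V.card → ∀ (c : ℕ → ℕ → β),
      (∀ x ∈ V, ∀ y ∈ V, x < y → c x y ∈ 𝒞) →
      ∃ T ⊆ V, T.card = L ∧ ∃ d : ℕ → β, (∀ x ∈ T, d x ∈ 𝒞) ∧
        ∀ x ∈ T, ∀ y ∈ T, x < y → c x y = d x := by
  intro L
  induction L with
  | zero =>
      refine ⟨1, one_pos, ?_⟩
      intro β _ 𝒞 h𝒞 hne V hV c hc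
      exact ⟨∅, empty_subset _, card_empty, fun _ => hne.choose,
        fun x hx => absurd hx (notMem_empty x), fun x hx => absurd hx (notMem_empty x)⟩
  | succ L ih =>
      obtain ⟨R, hRpos, hR⟩ := ih
      refine ⟨Cb * R + 1, Nat.succ_pos _, ?_⟩
      intro β _ 𝒞 h𝒞 hne V hV c hc
      have hVne : V.Nonempty := card_pos.mp (lt_of_lt_of_le (Nat.succ_pos _) hV)
      set x₀ := V.min' hVne with hx₀def
      have hx₀V : x₀ ∈ V := V.min'_mem hVne
      set V' := V.erase x₀ with hV'def
      have hV'card : Cb * R ≤ V'.card := by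
        have h1 : V'.card = V.card - 1 := by rw [hV'def]; exact card_erase_of_mem hx₀V
        omega
      have hmaps : ∀ y ∈ V', (fun y => c x₀ y) y ∈ 𝒞 := by
        intro y hy
        have hyV : y ∈ V := mem_of_mem_erase hy
        have hlt : x₀ < y :=
          lt_of_le_of_ne (V.min'_le y hyV) (Ne.symm (ne_of_mem_erase hy))
        exact hc x₀ hx₀V y hyV hlt
      have hn : 𝒞.card * R ≤ V'.card :=
        le_trans (Nat.mul_le_mul_right R h𝒞) hV'card
      obtain ⟨d₀, hd₀𝒞, hfib⟩ :=
        exists_le_card_fiber_of_mul_le_card_of_maps_to hmaps hne hn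
      set W := V'.filter (fun y => c x₀ y = d₀) with hWdef
      have hWV : W ⊆ V := (filter_subset _ _).trans (erase_subset _ _)
      obtain ⟨T', hT'W, hT'card, d', hd'𝒞, hd'⟩ :=
        hR 𝒞 h𝒞 hne W hfib c (fun x hx y hy => hc x (hWV hx) y (hWV hy))
      have hx₀T' : x₀ ∉ T' := fun h =>
        (notMem_erase x₀ V) (mem_of_mem_filter _ (hT'W h))
      refine ⟨insert x₀ T', ?_, ?_, fun x => if x = x₀ then d₀ else d' x, ?_, ?_⟩
      · exact insert_subset hx₀V (hT'W.trans hWV)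
      · rw [card_insert_of_notMem hx₀T', hT'card]
      · intro x hx
        rcases mem_insert.mp hx with h | h
        · simp [h, hd₀𝒞]
        · by_cases hxx : x = x₀
          · simp [hxx, hd₀𝒞]
          · simpa [hxx] using hd'𝒞 x h
      · intro x hx y hy hxy
        have hyT' : y ∈ T' := by
          rcases mem_insert.mp hy with h | h
          · exfalso
            rcases mem_insert.mp hx with h' | h'
            · omega
            · have : x₀ < x := lt_of_le_of_ne
                (V.min'_le x (hWV (hT'W h')))
                (Ne.symm (ne_of_mem_erase (mem_of_mem_filter _ (hT'W h'))))
              omega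
          · exact h
        rcases mem_insert.mp hx with h | h
        · have : c x₀ y = d₀ := (mem_filter.mp (hT'W hyT')).2
          simp [h, this]
        · have hxx : x ≠ x₀ := fun hh => hx₀T' (hh ▸ h)
          simp only [hxx, if_false]
          exact hd' x h y hyT' hxy

lemma ramsey_pairs (Cb t : ℕ) : ∃ R : ℕ, 0 < R ∧
    ∀ {β : Type} [DecidableEq β] (𝒞 : Finset β), 𝒞.card ≤ Cb → 𝒞.Nonempty →
    ∀ (V : Finset ℕ), R ≤ V.card → ∀ (c : ℕ → ℕ → β),
      (∀ x ∈ V, ∀ y ∈ V, x < y → c x y ∈ 𝒞) →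
      ∃ T ⊆ V, T.card = t ∧ ∃ d : β, ∀ x ∈ T, ∀ y ∈ T, x < y → c x y = d := by
  obtain ⟨R, hRpos, hR⟩ := ramsey_chain Cb (Cb * t + 1)
  refine ⟨R, hRpos, ?_⟩
  intro β _ 𝒞 h𝒞 hne V hV c hc
  obtain ⟨T, hTV, hTcard, d, hd𝒞, hd⟩ := hR 𝒞 h𝒞 hne V hV c hc
  have hTne : T.Nonempty := card_pos.mp (by omega)
  set Tm := T.erase (T.max' hTne) with hTmdef
  have hTmcard : Cb * t ≤ Tm.card := by
    have h1 : Tm.card = T.card - 1 := by rw [hTmdef]; exact card_erase_of_mem (T.max'_mem hTne)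
    omega
  have hmaps : ∀ x ∈ Tm, d x ∈ 𝒞 := fun x hx => hd𝒞 x (mem_of_mem_erase hx)
  have hn : 𝒞.card * t ≤ Tm.card := le_trans (Nat.mul_le_mul_right t h𝒞) hTmcard
  obtain ⟨d₀, hd₀𝒞, hfib⟩ := exists_le_card_fiber_of_mul_le_card_of_maps_to hmaps hne hn
  obtain ⟨Tf, hTfF, hTfcard⟩ := exists_subset_card_eq hfib
  refine ⟨Tf, ?_, hTfcard, d₀, ?_⟩
  · exact hTfF.trans ((filter_subset _ _).trans ((erase_subset _ _).trans hTV))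
  · intro x hx y hy hxy
    have hxT : x ∈ T := mem_of_mem_erase (mem_of_mem_filter _ (hTfF hx))
    have hyT : y ∈ T := mem_of_mem_erase (mem_of_mem_filter _ (hTfF hy))
    rw [hd x hxT y hyT hxy]
    exact (mem_filter.mp (hTfF hx)).2

lemma prod_ramsey : ∀ (K m : ℕ), ∃ M : ℕ, 0 < M ∧
    ∀ (U : Fin K → Finset ℕ), (∀ i, M ≤ (U i).card) →
    ∀ (D : Set (Fin K → ℕ)),
    ∃ B : Fin K → Finset ℕ, (∀ i, B i ⊆ U i) ∧ (∀ i, (B i).card = m) ∧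
      ((∀ w, (∀ i, w i ∈ B i) → w ∈ D) ∨ (∀ w, (∀ i, w i ∈ B i) → w ∉ D)) := by
  intro K
  induction K with
  | zero =>
      intro m
      refine ⟨1, one_pos, ?_⟩
      intro U hU D
      refine ⟨fun i => i.elim0, fun i => i.elim0, fun i => i.elim0, ?_⟩
      by_cases h : (fun i => i.elim0) ∈ D
      · left
        intro w _
        have hw : w = fun i => i.elim0 := funext fun i => i.elim0
        rwa [hw]
      · right
        intro w _
        have hw : w = fun i => i.elim0 := funext fun i => i.elim0
        rwa [hw]
  | succ K ih =>
      intro m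
      classical
      obtain ⟨M₀, hM₀, hIH⟩ := ih m
      refine ⟨M₀ + 2 ^ (M₀ ^ K) * m + 1, by positivity, ?_⟩
      intro U hU D
      by_cases hm : m = 0
      · refine ⟨fun _ => ∅, fun i => empty_subset _, fun i => by simp [hm], ?_⟩
        left
        intro w hw
        exact absurd (hw 0) (notMem_empty _)
      have hpick : ∀ i : Fin K, ∃ V : Finset ℕ, V ⊆ U i.succ ∧ V.card = M₀ := fun i =>
        exists_subset_card_eq (le_trans (by omega) (hU i.succ))
      choose U' hU'sub hU'card using hpick
      set G := Fintype.piFinset U' with hGdef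
      have hGcard : G.card = M₀ ^ K := by
        rw [hGdef, Fintype.card_piFinset]
        simp [hU'card]
      set σ : ℕ → Finset (Fin K → ℕ) := fun x => G.filter (fun v => Fin.cons x v ∈ D)
        with hσdef
      have hmaps : ∀ x ∈ U 0, σ x ∈ G.powerset := fun x _ =>
        mem_powerset.mpr (filter_subset _ _)
      have hn : (G.powerset).card * m ≤ (U 0).card := by
        rw [card_powerset, hGcard]
        have := hU 0
        omega
      obtain ⟨σ₀, hσ₀, hfib⟩ :=
        exists_le_card_fiber_of_mul_le_card_of_maps_to hmaps ⟨G, mem_powerset_self G⟩ hn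
      obtain ⟨X, hXsub, hXcard⟩ := exists_subset_card_eq hfib
      have hXne : X.Nonempty := card_pos.mp (by omega)
      obtain ⟨x₀, hx₀X⟩ := hXne
      have hσeq : ∀ x ∈ X, σ x = σ₀ := fun x hx => (mem_filter.mp (hXsub hx)).2
      obtain ⟨B', hB'sub, hB'card, hcase⟩ :=
        hIH U' (fun i => (hU'card i).ge) {v | Fin.cons x₀ v ∈ D}
      set Bfull : Fin (K + 1) → Finset ℕ := Fin.cons X B' with hBfull
      refine ⟨Bfull, ?_, ?_, ?_⟩
      · intro i
        refine Fin.cases ?_ ?_ i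
        · simpa [hBfull] using (hXsub.trans (filter_subset _ _))
        · intro j
          simpa [hBfull] using (hB'sub j).trans (hU'sub j)
      · intro i
        refine Fin.cases ?_ ?_ i
        · simpa [hBfull] using hXcard
        · intro j
          simpa [hBfull] using hB'card j
      · have key : ∀ w : Fin (K + 1) → ℕ, (∀ i, w i ∈ Bfull i) →
            (w ∈ D ↔ Fin.cons x₀ (Fin.tail w) ∈ D) := by
          intro w hw
          have hw0 : w 0 ∈ X := by simpa [hBfull] using hw 0
          have htail : ∀ j, Fin.tail w j ∈ B' j := fun j => by
            have := hw j.succ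
            simpa [hBfull, Fin.tail] using this
          have htailG : Fin.tail w ∈ G := by
            rw [hGdef, Fintype.mem_piFinset]
            exact fun j => hB'sub j (htail j)
          have h1 : w ∈ D ↔ Fin.tail w ∈ σ (w 0) := by
            rw [hσdef]
            simp only [mem_filter, htailG, true_and]
            rw [Fin.cons_self_tail]
          have h2 : Fin.cons x₀ (Fin.tail w) ∈ D ↔ Fin.tail w ∈ σ x₀ := by
            rw [hσdef]
            simp only [mem_filter, htailG, true_and]
          rw [h1, h2, hσeq (w 0) hw0, hσeq x₀ hx₀X]
        rcases hcase with hin | hout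
        · left
          intro w hw
          have htail : ∀ j, Fin.tail w j ∈ B' j := fun j => by
            have := hw j.succ
            simpa [hBfull, Fin.tail] using this
          exact (key w hw).mpr (hin (Fin.tail w) htail)
        · right
          intro w hw hwD
          have htail : ∀ j, Fin.tail w j ∈ B' j := fun j => by
            have := hw j.succ
            simpa [hBfull, Fin.tail] using this
          exact hout (Fin.tail w) htail ((key w hw).mp hwD)

lemma cpt : ∀ (K m : ℕ), ∃ M : ℕ, 0 < M ∧
    ∀ (U : Fin K → Finset ℕ), (∀ i, M ≤ (U i).card) →
    ∀ {α : Type u} (f : (Fin K → ℕ) → α),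
    ∃ (A : Fin K → Finset ℕ) (S : Finset (Fin K)),
      (∀ i, A i ⊆ U i) ∧ (∀ i, (A i).card = m) ∧
      ∀ w w', (∀ i, w i ∈ A i) → (∀ i, w' i ∈ A i) →
        (f w = f w' ↔ ∀ i ∈ S, w i = w' i) := by
  intro K
  induction K with
  | zero =>
      intro m
      refine ⟨1, one_pos, ?_⟩
      intro U hU α f
      refine ⟨fun i => i.elim0, ∅, fun i => i.elim0, fun i => i.elim0, ?_⟩
      intro w w' _ _
      have hww : w = w' := funext fun i => i.elim0
      simp [hww]
  | succ K ih =>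
      intro m
      classical
      obtain ⟨m₁, hm₁pos, hPR⟩ := prod_ramsey K m
      obtain ⟨M₁, hM₁pos, hCPT⟩ := ih m₁
      set Cb := 2 ^ (m₁ ^ K * m₁ ^ K) with hCbdef
      set t₀ := m + 3 with ht₀def
      obtain ⟨RP, hRPpos, hRam⟩ := ramsey_pairs Cb t₀
      refine ⟨M₁ + (2 ^ M₁) ^ K * 2 ^ K * RP + 1, by positivity, ?_⟩
      intro U hU α f
      have hpick : ∀ i : Fin K, ∃ V : Finset ℕ, V ⊆ U i.succ ∧ V.card = M₁ := fun i =>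
        exists_subset_card_eq (le_trans (by omega) (hU i.succ))
      choose U' hU'sub hU'card using hpick
      have hrows : ∀ x : ℕ, ∃ (A : Fin K → Finset ℕ) (S : Finset (Fin K)),
          (∀ i, A i ⊆ U' i) ∧ (∀ i, (A i).card = m₁) ∧
          ∀ w w', (∀ i, w i ∈ A i) → (∀ i, w' i ∈ A i) →
            ((fun v => f (Fin.cons x v)) w = (fun v => f (Fin.cons x v)) w' ↔
              ∀ i ∈ S, w i = w' i) := fun x =>
        hCPT U' (fun i => (hU'card i).ge) (fun v => f (Fin.cons x v))
      choose 𝒜 Srow hsub hcard hcanon using hrows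
      set data : ℕ → ((Fin K → Finset ℕ) × Finset (Fin K)) := fun x => (𝒜 x, Srow x)
        with hdatadef
      set 𝒯 : Finset ((Fin K → Finset ℕ) × Finset (Fin K)) :=
        (Fintype.piFinset fun i => (U' i).powerset) ×ˢ Finset.univ with h𝒯def
      have hmaps : ∀ x ∈ U 0, data x ∈ 𝒯 := fun x _ =>
        mem_product.mpr ⟨Fintype.mem_piFinset.mpr (fun i => mem_powerset.mpr (hsub x i)),
          mem_univ _⟩
      have h𝒯card : 𝒯.card = (2 ^ M₁) ^ K * 2 ^ K := by
        rw [h𝒯def, card_product, Fintype.card_piFinset]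
        congr 1
        · rw [Finset.prod_congr rfl (fun i _ => by rw [card_powerset, hU'card i])]
          simp
        · simp [card_univ]
      have h𝒯ne : 𝒯.Nonempty :=
        ⟨(fun _ => ∅, ∅), mem_product.mpr
          ⟨Fintype.mem_piFinset.mpr fun i => mem_powerset.mpr (empty_subset _), mem_univ _⟩⟩
      have hn : 𝒯.card * RP ≤ (U 0).card := by
        rw [h𝒯card]
        have := hU 0
        omega
      obtain ⟨dat₀, hdat₀, hfib⟩ :=
        exists_le_card_fiber_of_mul_le_card_of_maps_to hmaps h𝒯ne hn
      set T₁ := (U 0).filter (fun x => data x = dat₀) with hT₁def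
      set Astar := dat₀.1 with hAstardef
      set S₀ := dat₀.2 with hS₀def
      have hAx : ∀ x ∈ T₁, 𝒜 x = Astar ∧ Srow x = S₀ := by
        intro x hx
        have h := (mem_filter.mp hx).2
        exact ⟨congrArg Prod.fst h, congrArg Prod.snd h⟩
      have hT₁ne : T₁.Nonempty := card_pos.mp (by omega)
      obtain ⟨xbar, hxbar⟩ := hT₁ne
      have hAsub : ∀ i, Astar i ⊆ U' i := by
        rw [← (hAx xbar hxbar).1]; exact hsub xbar
      have hAcard : ∀ i, (Astar i).card = m₁ := by
        rw [← (hAx xbar hxbar).1]; exact hcard xbar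
      set G := Fintype.piFinset Astar with hGdef
      have hGcard : G.card = m₁ ^ K := by
        rw [hGdef, Fintype.card_piFinset,
          Finset.prod_congr rfl (fun i _ => hAcard i)]
        simp
      set c : ℕ → ℕ → Finset ((Fin K → ℕ) × (Fin K → ℕ)) := fun x y =>
        (G ×ˢ G).filter (fun pr => f (Fin.cons x pr.1) = f (Fin.cons y pr.2)) with hcdef
      have hc : ∀ x ∈ T₁, ∀ y ∈ T₁, x < y → c x y ∈ (G ×ˢ G).powerset := fun x _ y _ _ =>
        mem_powerset.mpr (filter_subset _ _)
      have h𝒞card : ((G ×ˢ G).powerset).card ≤ Cb := by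
        rw [card_powerset, card_product, hGcard, hCbdef]
      obtain ⟨T₂, hT₂sub, hT₂card, P, hP⟩ :=
        hRam ((G ×ˢ G).powerset) h𝒞card ⟨∅, mem_powerset.mpr (empty_subset _)⟩
          T₁ hfib c hc
      -- three ordered elements of T₂
      have hT₂ne : T₂.Nonempty := card_pos.mp (by omega)
      set x₀ := T₂.min' hT₂ne with hx₀def
      have hx₀ : x₀ ∈ T₂ := T₂.min'_mem hT₂ne
      have hE1ne : (T₂.erase x₀).Nonempty := by
        apply card_pos.mp
        rw [card_erase_of_mem hx₀]
        omega
      set x₁ := (T₂.erase x₀).min' hE1ne with hx₁def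
      have hx₁e : x₁ ∈ T₂.erase x₀ := min'_mem _ _
      have hx₁ : x₁ ∈ T₂ := mem_of_mem_erase hx₁e
      have h01 : x₀ < x₁ :=
        lt_of_le_of_ne (T₂.min'_le x₁ hx₁) (Ne.symm (ne_of_mem_erase hx₁e))
      have hE2ne : ((T₂.erase x₀).erase x₁).Nonempty := by
        apply card_pos.mp
        rw [card_erase_of_mem hx₁e, card_erase_of_mem hx₀]
        omega
      set x₂ := ((T₂.erase x₀).erase x₁).min' hE2ne with hx₂def
      have hx₂e : x₂ ∈ (T₂.erase x₀).erase x₁ := min'_mem _ _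
      have hx₂ : x₂ ∈ T₂ := mem_of_mem_erase (mem_of_mem_erase hx₂e)
      have h12 : x₁ < x₂ :=
        lt_of_le_of_ne ((T₂.erase x₀).min'_le x₂ (mem_of_mem_erase hx₂e))
          (Ne.symm (ne_of_mem_erase hx₂e))
      -- pattern characterization
      have hT₂T₁ : T₂ ⊆ T₁ := hT₂sub
      have hpat : ∀ x ∈ T₂, ∀ y ∈ T₂, x < y → ∀ v ∈ G, ∀ v' ∈ G,
          (f (Fin.cons x v) = f (Fin.cons y v') ↔ (v, v') ∈ P) := by
        intro x hx y hy hxy v hv v' hv'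
        rw [← hP x hx y hy hxy, hcdef]
        simp only [mem_filter, mem_product]
        tauto
      -- row canonicity
      have hrc : ∀ x ∈ T₂, ∀ v ∈ G, ∀ v' ∈ G,
          (f (Fin.cons x v) = f (Fin.cons x v') ↔ ∀ i ∈ S₀, v i = v' i) := by
        intro x hx v hv v' hv'
        have hAxx := hAx x (hT₂T₁ hx)
        have h1 := hcanon x v v'
          (fun i => by rw [hAxx.1]; exact Fintype.mem_piFinset.mp hv i)
          (fun i => by rw [hAxx.1]; exact Fintype.mem_piFinset.mp hv' i)
        rw [hAxx.2] at h1
        exact h1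
      set D := G.filter (fun v => f (Fin.cons x₀ v) = f (Fin.cons x₁ v)) with hDdef
      have hkey : ∀ v ∈ G, ∀ v' ∈ G,
          ((v, v') ∈ P ↔ (v ∈ D ∧ ∀ i ∈ S₀, v i = v' i)) := by
        intro v hv v' hv'
        constructor
        · intro h
          have e01 : f (Fin.cons x₀ v) = f (Fin.cons x₁ v') :=
            (hpat x₀ hx₀ x₁ hx₁ h01 v hv v' hv').mpr h
          have e02 : f (Fin.cons x₀ v) = f (Fin.cons x₂ v') :=
            (hpat x₀ hx₀ x₂ hx₂ (h01.trans h12) v hv v' hv').mpr h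
          have e12 : f (Fin.cons x₁ v') = f (Fin.cons x₂ v') := e01.symm.trans e02
          have hv'P : (v', v') ∈ P := (hpat x₁ hx₁ x₂ hx₂ h12 v' hv' v' hv').mp e12
          have e01' : f (Fin.cons x₀ v') = f (Fin.cons x₁ v') :=
            (hpat x₀ hx₀ x₁ hx₁ h01 v' hv' v' hv').mpr hv'P
          have e00 : f (Fin.cons x₀ v) = f (Fin.cons x₀ v') := e01.trans e01'.symm
          have hproj : ∀ i ∈ S₀, v i = v' i := (hrc x₀ hx₀ v hv v' hv').mp e00
          refine ⟨?_, hproj⟩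
          have e11 : f (Fin.cons x₁ v) = f (Fin.cons x₁ v') :=
            (hrc x₁ hx₁ v hv v' hv').mpr hproj
          exact mem_filter.mpr ⟨hv, e01.trans e11.symm⟩
        · rintro ⟨hvD, hproj⟩
          have hD' := (mem_filter.mp hvD).2
          have e11 : f (Fin.cons x₁ v) = f (Fin.cons x₁ v') :=
            (hrc x₁ hx₁ v hv v' hv').mpr hproj
          exact (hpat x₀ hx₀ x₁ hx₁ h01 v hv v' hv').mp (hD'.trans e11)
      have hDproj : ∀ v ∈ G, ∀ v' ∈ G, (∀ i ∈ S₀, v i = v' i) → (v ∈ D ↔ v' ∈ D) := by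
        intro v hv v' hv' hproj
        have h0 : f (Fin.cons x₀ v) = f (Fin.cons x₀ v') := (hrc x₀ hx₀ v hv v' hv').mpr hproj
        have h1 : f (Fin.cons x₁ v) = f (Fin.cons x₁ v') := (hrc x₁ hx₁ v hv v' hv').mpr hproj
        rw [hDdef]
        simp only [mem_filter, hv, hv', true_and]
        constructor
        · intro h
          exact h0.symm.trans (h.trans h1)
        · intro h
          exact h0.trans (h.trans h1.symm)
      have hcross : ∀ x ∈ T₂, ∀ y ∈ T₂, x ≠ y → ∀ v ∈ G, ∀ v' ∈ G,
          (f (Fin.cons x v) = f (Fin.cons y v') ↔ (v ∈ D ∧ ∀ i ∈ S₀, v i = v' i)) := by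
        intro x hx y hy hxy v hv v' hv'
        rcases lt_or_gt_of_ne hxy with h | h
        · rw [hpat x hx y hy h v hv v' hv', hkey v hv v' hv']
        · rw [show (f (Fin.cons x v) = f (Fin.cons y v')) ↔
              (f (Fin.cons y v') = f (Fin.cons x v)) from eq_comm,
            hpat y hy x hx h v' hv' v hv, hkey v' hv' v hv]
          constructor
          · rintro ⟨hv'D, hproj⟩
            have hproj' : ∀ i ∈ S₀, v i = v' i := fun i hi => (hproj i hi).symm
            exact ⟨(hDproj v hv v' hv' hproj').mpr hv'D, hproj'⟩
          · rintro ⟨hvD, hproj⟩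
            exact ⟨(hDproj v hv v' hv' hproj).mp hvD, fun i hi => (hproj i hi).symm⟩
      obtain ⟨B, hBsub, hBcard, hBcase⟩ := hPR Astar (fun i => (hAcard i).ge) {v | v ∈ D}
      obtain ⟨T₃, hT₃sub, hT₃card⟩ := exists_subset_card_eq (show m ≤ T₂.card by omega)
      set Afin : Fin (K + 1) → Finset ℕ := Fin.cons T₃ B with hAfindef
      have hAfinsub : ∀ i, Afin i ⊆ U i := by
        intro i
        refine Fin.cases ?_ ?_ i
        · simpa [hAfindef] using
            hT₃sub.trans (hT₂sub.trans (filter_subset _ _))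
        · intro j
          simpa [hAfindef] using (hBsub j).trans ((hAsub j).trans (hU'sub j))
      have hAfincard : ∀ i, (Afin i).card = m := by
        intro i
        refine Fin.cases ?_ ?_ i
        · simpa [hAfindef] using hT₃card
        · intro j
          simpa [hAfindef] using hBcard j
      -- decomposition facts
      have hdec : ∀ w : Fin (K + 1) → ℕ, (∀ i, w i ∈ Afin i) →
          w 0 ∈ T₂ ∧ Fin.tail w ∈ G ∧ (∀ j, Fin.tail w j ∈ B j) ∧
            f w = f (Fin.cons (w 0) (Fin.tail w)) := by
        intro w hw
        have hw0 : w 0 ∈ T₃ := by simpa [hAfindef] using hw 0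
        have htail : ∀ j, Fin.tail w j ∈ B j := fun j => by
          have := hw j.succ
          simpa [hAfindef, Fin.tail] using this
        refine ⟨hT₃sub hw0, ?_, htail, by rw [Fin.cons_self_tail]⟩
        rw [hGdef, Fintype.mem_piFinset]
        exact fun j => hBsub j (htail j)
      rcases hBcase with hin | hout
      · -- subgrid inside D : f does not depend on first coordinate
        refine ⟨Afin, S₀.image Fin.succ, hAfinsub, hAfincard, ?_⟩
        intro w w' hw hw'
        obtain ⟨hw0, hwG, hwB, hwf⟩ := hdec w hw
        obtain ⟨hw0', hwG', hwB', hwf'⟩ := hdec w' hw'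
        rw [hwf, hwf']
        have hRHS : (∀ i ∈ S₀.image Fin.succ, w i = w' i) ↔
            (∀ i ∈ S₀, Fin.tail w i = Fin.tail w' i) := by
          rw [Finset.forall_mem_image]
          exact Iff.rfl
        rw [hRHS]
        by_cases h00 : w 0 = w' 0
        · rw [h00]
          exact hrc (w' 0) hw0' (Fin.tail w) hwG (Fin.tail w') hwG'
        · rw [hcross (w 0) hw0 (w' 0) hw0' h00 (Fin.tail w) hwG (Fin.tail w') hwG']
          have hD : Fin.tail w ∈ D := hin (Fin.tail w) hwB
          simp [hD]
      · -- subgrid outside D : f depends injectively also on the first coordinate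
        refine ⟨Afin, insert 0 (S₀.image Fin.succ), hAfinsub, hAfincard, ?_⟩
        intro w w' hw hw'
        obtain ⟨hw0, hwG, hwB, hwf⟩ := hdec w hw
        obtain ⟨hw0', hwG', hwB', hwf'⟩ := hdec w' hw'
        rw [hwf, hwf']
        have hRHS : (∀ i ∈ insert 0 (S₀.image Fin.succ), w i = w' i) ↔
            (w 0 = w' 0 ∧ ∀ i ∈ S₀, Fin.tail w i = Fin.tail w' i) := by
          rw [Finset.forall_mem_insert, Finset.forall_mem_image]
          exact Iff.rfl
        rw [hRHS]
        by_cases h00 : w 0 = w' 0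
        · rw [h00]
          simp only [h00, true_and]
          exact hrc (w' 0) hw0' (Fin.tail w) hwG (Fin.tail w') hwG'
        · rw [hcross (w 0) hw0 (w' 0) hw0' h00 (Fin.tail w) hwG (Fin.tail w') hwG']
          have hD : Fin.tail w ∉ D := hout (Fin.tail w) hwB
          simp [hD, h00]

end RectCanon

open Finset

/-- For positive reals `a, b` with `(b/a)²` rational, there exists `n` such that every
coloring of `ℝⁿ` with an arbitrary set of colors contains the vertex set of an
`a × b` rectangle (an isometric copy of `{(0,0), (a,0), (0,b), (a,b)}`) that is either
monochromatic or rainbow. -/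
theorem rectangle_mono_or_rainbow (a b : ℝ) (ha : 0 < a) (hb : 0 < b)
    (hq : ∃ q : ℚ, (b / a) ^ 2 = (q : ℝ)) :
    ∃ n : ℕ, 0 < n ∧
      ∀ (α : Type*) (χ : EuclideanSpace ℝ (Fin n) → α),
        ∃ x₁ x₂ x₃ x₄ : EuclideanSpace ℝ (Fin n),
          dist x₁ x₂ = a ∧ dist x₃ x₄ = a ∧
          dist x₁ x₃ = b ∧ dist x₂ x₄ = b ∧
          dist x₁ x₄ = Real.sqrt (a ^ 2 + b ^ 2) ∧
          dist x₂ x₃ = Real.sqrt (a ^ 2 + b ^ 2) ∧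
          ((χ x₁ = χ x₂ ∧ χ x₁ = χ x₃ ∧ χ x₁ = χ x₄) ∨
            (χ x₁ ≠ χ x₂ ∧ χ x₁ ≠ χ x₃ ∧ χ x₁ ≠ χ x₄ ∧
              χ x₂ ≠ χ x₃ ∧ χ x₂ ≠ χ x₄ ∧ χ x₃ ≠ χ x₄)) := by
  classical
  obtain ⟨r, hr⟩ := hq
  have ha' : a ≠ 0 := ne_of_gt ha
  have hr0 : (0:ℝ) < (r:ℝ) := by rw [← hr]; positivity
  have hrpos : 0 < r := by exact_mod_cast hr0
  set q : ℕ := r.den with hqdef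
  set p : ℕ := r.num.toNat with hpdef
  have hqpos : 0 < q := r.pos
  have hnumpos : 0 < r.num := Rat.num_pos.mpr hrpos
  have hppos : 0 < p := by
    rw [hpdef]
    omega
  have hnum : (r.num : ℝ) = (p : ℝ) := by
    rw [hpdef]
    norm_cast
    omega
  have hq0 : ((q:ℕ):ℝ) ≠ 0 := by positivity
  have key : b ^ 2 * q = a ^ 2 * p := by
    have h1 : (b / a) ^ 2 = (p : ℝ) / (q : ℝ) := by
      rw [hr, Rat.cast_def, hnum, hqdef]
    rw [div_pow] at h1
    field_simp at h1
    linarith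
  set K := q + p + 1 with hKdef
  obtain ⟨M, hMpos, hcpt⟩ := RectCanon.cpt K 2
  refine ⟨K * M, by positivity, ?_⟩
  intro α χ
  set cc : ℝ := Real.sqrt (a ^ 2 / (2 * q)) with hccdef
  have hcc2 : cc ^ 2 = a ^ 2 / (2 * q) := by
    rw [hccdef]
    exact Real.sq_sqrt (by positivity)
  set pt : (Fin K → ℕ) → EuclideanSpace ℝ (Fin (K * M)) := fun w => WithLp.toLp 2 (fun k =>
    if w (finProdFinEquiv.symm k).1 = (((finProdFinEquiv.symm k).2 : Fin M) : ℕ) then cc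
    else 0) with hptdef
  -- block sum
  have block : ∀ (u v : ℕ), u < M → v < M →
      ∑ j : Fin M, ((if u = (j : ℕ) then cc else 0) - (if v = (j : ℕ) then cc else 0)) ^ 2
        = if u = v then 0 else a ^ 2 / q := by
    intro u v hu hv
    by_cases huv : u = v
    · simp [huv]
    · rw [if_neg huv]
      have hterm : ∀ j : Fin M,
          ((if u = (j : ℕ) then cc else 0) - (if v = (j : ℕ) then cc else 0)) ^ 2
          = (if (⟨u, hu⟩ : Fin M) = j then cc ^ 2 else 0)
            + (if (⟨v, hv⟩ : Fin M) = j then cc ^ 2 else 0) := by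
        intro j
        have e1 : ((⟨u, hu⟩ : Fin M) = j) ↔ u = (j : ℕ) := by
          rw [Fin.ext_iff]
        have e2 : ((⟨v, hv⟩ : Fin M) = j) ↔ v = (j : ℕ) := by
          rw [Fin.ext_iff]
        by_cases h1 : u = (j : ℕ) <;> by_cases h2 : v = (j : ℕ)
        · exact absurd (h1.trans h2.symm) huv
        · simp [h1, h2, e1, e2]
          try ring
        · simp [h1, h2, e1, e2]
          try ring
        · simp [h1, h2, e1, e2]
          try ring
      rw [Finset.sum_congr rfl (fun j _ => hterm j), Finset.sum_add_distrib,
        Finset.sum_ite_eq, Finset.sum_ite_eq]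
      simp only [mem_univ, if_true]
      rw [hcc2]
      field_simp
      ring
  -- distance formula
  have hdist : ∀ w w' : Fin K → ℕ, (∀ i, w i < M) → (∀ i, w' i < M) →
      dist (pt w) (pt w') =
        Real.sqrt (((univ.filter (fun i => w i ≠ w' i)).card : ℝ) * (a ^ 2 / q)) := by
    intro w w' hw hw'
    rw [EuclideanSpace.dist_eq]
    congr 1
    simp only [Real.dist_eq, sq_abs]
    rw [← Equiv.sum_comp finProdFinEquiv (fun k => (pt w k - pt w' k) ^ 2)]
    have hsimp : ∀ ij : Fin K × Fin M,
        (pt w (finProdFinEquiv ij) - pt w' (finProdFinEquiv ij)) ^ 2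
        = ((if w ij.1 = (ij.2 : ℕ) then cc else 0) - (if w' ij.1 = (ij.2 : ℕ) then cc else 0)) ^ 2 := by
      intro ij
      rw [hptdef]
      simp [Equiv.symm_apply_apply]
    rw [Fintype.sum_prod_type]
    calc ∑ i : Fin K, ∑ j : Fin M,
          (pt w (finProdFinEquiv (i, j)) - pt w' (finProdFinEquiv (i, j))) ^ 2
        = ∑ i : Fin K, ∑ j : Fin M,
          ((if w i = (j : ℕ) then cc else 0) - (if w' i = (j : ℕ) then cc else 0)) ^ 2 := by
          exact Finset.sum_congr rfl fun i _ => Finset.sum_congr rfl fun j _ => hsimp (i, j)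
      _ = ∑ i : Fin K, (if w i = w' i then 0 else a ^ 2 / q) := by
          exact Finset.sum_congr rfl fun i _ => block (w i) (w' i) (hw i) (hw' i)
      _ = ∑ i : Fin K, (if w i ≠ w' i then a ^ 2 / q else 0) := by
          refine Finset.sum_congr rfl fun i _ => ?_
          by_cases h : w i = w' i <;> simp [h]
      _ = ((univ.filter (fun i => w i ≠ w' i)).card : ℝ) * (a ^ 2 / q) := by
          rw [← Finset.sum_filter, Finset.sum_const, nsmul_eq_mul]
  -- apply the canonical product theorem
  obtain ⟨A, S, hsub, hcard2, hcanon⟩ :=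
    hcpt (fun _ => Finset.range M) (fun i => by simp) (fun w => χ (pt w))
  have h2 : ∀ i, ∃ u' ∈ A i, ∃ v' ∈ A i, u' ≠ v' := by
    intro i
    exact Finset.one_lt_card.mp (by rw [hcard2 i]; omega)
  choose uu huu vv hvv huv using h2
  have hult : ∀ i, uu i < M := fun i => mem_range.mp (hsub i (huu i))
  have hvlt : ∀ i, vv i < M := fun i => mem_range.mp (hsub i (hvv i))
  -- construct index sets SS TT of sizes q p
  have hKcard : (univ : Finset (Fin K)).card = q + p + 1 := by simp [hKdef]
  obtain ⟨SS, TT, hSScard, hTTcard, hdisj, hgood⟩ :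
      ∃ SS TT : Finset (Fin K), SS.card = q ∧ TT.card = p ∧ Disjoint SS TT ∧
        ((∀ i ∈ S, i ∉ SS ∧ i ∉ TT) ∨
          (∃ i₀ ∈ S, ∃ i₁ ∈ S, i₀ ∈ SS ∧ i₁ ∈ TT ∧ i₀ ∉ TT ∧ i₁ ∉ SS)) := by
    by_cases hScase : ∃ i₀ ∈ S, ∃ i₁ ∈ S, i₀ ≠ i₁
    · obtain ⟨i₀, hi₀, i₁, hi₁, hne⟩ := hScase
      have hc2 : ({i₀, i₁} : Finset (Fin K)).card = 2 := by
        rw [card_insert_of_notMem (by simp [hne]), card_singleton]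
      have hcsd : ((univ : Finset (Fin K)) \ {i₀, i₁}).card = q + p - 1 := by
        rw [card_sdiff_of_subset (subset_univ _), hKcard, hc2]
        omega
      obtain ⟨S₁, hS₁sub, hS₁card⟩ :=
        exists_subset_card_eq (show q - 1 ≤ ((univ : Finset (Fin K)) \ {i₀, i₁}).card by omega)
      obtain ⟨T₁, hT₁sub, hT₁card⟩ :=
        exists_subset_card_eq
          (show p - 1 ≤ (((univ : Finset (Fin K)) \ {i₀, i₁}) \ S₁).card by
            rw [card_sdiff_of_subset hS₁sub, hcsd, hS₁card]; omega)
      have hi₀S₁ : i₀ ∉ S₁ := fun h => by simpa using (mem_sdiff.mp (hS₁sub h)).2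
      have hi₁S₁ : i₁ ∉ S₁ := fun h => by simpa using (mem_sdiff.mp (hS₁sub h)).2
      have hi₀T₁ : i₀ ∉ T₁ := fun h => by
        simpa using (mem_sdiff.mp (mem_sdiff.mp (hT₁sub h)).1).2
      have hi₁T₁ : i₁ ∉ T₁ := fun h => by
        simpa using (mem_sdiff.mp (mem_sdiff.mp (hT₁sub h)).1).2
      have hS₁T₁ : Disjoint S₁ T₁ := by
        rw [disjoint_left]
        intro x hx hx'
        exact (mem_sdiff.mp (hT₁sub hx')).2 hx
      refine ⟨insert i₀ S₁, insert i₁ T₁, ?_, ?_, ?_, Or.inr ⟨i₀, hi₀, i₁, hi₁, ?_, ?_, ?_, ?_⟩⟩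
      · rw [card_insert_of_notMem hi₀S₁, hS₁card]; omega
      · rw [card_insert_of_notMem hi₁T₁, hT₁card]; omega
      · rw [disjoint_left]
        intro x hx hx'
        rcases mem_insert.mp hx with rfl | hx
        · rcases mem_insert.mp hx' with h | h
          · exact hne h
          · exact hi₀T₁ h
        · rcases mem_insert.mp hx' with rfl | hx'
          · exact hi₁S₁ hx
          · exact (disjoint_left.mp hS₁T₁) hx hx'
      · exact mem_insert_self _ _
      · exact mem_insert_self _ _
      · intro h
        rcases mem_insert.mp h with h | h
        · exact hne h
        · exact hi₀T₁ h
      · intro h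
        rcases mem_insert.mp h with h | h
        · exact hne h.symm
        · exact hi₁S₁ h
    · push_neg at hScase
      have hsdcard : ((univ : Finset (Fin K)) \ S).card ≥ q + p := by
        have hS1 : S.card ≤ 1 := card_le_one.mpr fun x hx y hy => hScase x hx y hy
        rw [card_sdiff_of_subset (subset_univ _), hKcard]
        omega
      obtain ⟨SS, hSSsub, hSScard⟩ :=
        exists_subset_card_eq (show q ≤ ((univ : Finset (Fin K)) \ S).card by omega)
      obtain ⟨TT, hTTsub, hTTcard⟩ :=
        exists_subset_card_eq
          (show p ≤ (((univ : Finset (Fin K)) \ S) \ SS).card by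
            rw [card_sdiff_of_subset hSSsub, hSScard]; omega)
      refine ⟨SS, TT, hSScard, hTTcard, ?_, Or.inl ?_⟩
      · rw [disjoint_left]
        intro x hx hx'
        exact (mem_sdiff.mp (hTTsub hx')).2 hx
      · intro i hi
        constructor
        · intro h
          exact (mem_sdiff.mp (hSSsub h)).2 hi
        · intro h
          exact (mem_sdiff.mp (mem_sdiff.mp (hTTsub h)).1).2 hi
  -- the four words
  set Ww : Fin K → ℕ := fun i => uu i with hWwdef
  set Bw : Fin K → ℕ := fun i => if i ∈ SS then vv i else uu i with hBwdef
  set Cw : Fin K → ℕ := fun i => if i ∈ TT then vv i else uu i with hCwdef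
  set Dw : Fin K → ℕ := fun i => if i ∈ SS ∪ TT then vv i else uu i with hDwdef
  have hWmem : ∀ i, Ww i ∈ A i := fun i => huu i
  have hBmem : ∀ i, Bw i ∈ A i := fun i => by
    rw [hBwdef]; dsimp only; split <;> [exact hvv i; exact huu i]
  have hCmem : ∀ i, Cw i ∈ A i := fun i => by
    rw [hCwdef]; dsimp only; split <;> [exact hvv i; exact huu i]
  have hDmem : ∀ i, Dw i ∈ A i := fun i => by
    rw [hDwdef]; dsimp only; split <;> [exact hvv i; exact huu i]
  have hWlt : ∀ i, Ww i < M := fun i => hult i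
  have hBlt : ∀ i, Bw i < M := fun i => by
    rw [hBwdef]; dsimp only; split <;> [exact hvlt i; exact hult i]
  have hClt : ∀ i, Cw i < M := fun i => by
    rw [hCwdef]; dsimp only; split <;> [exact hvlt i; exact hult i]
  have hDlt : ∀ i, Dw i < M := fun i => by
    rw [hDwdef]; dsimp only; split <;> [exact hvlt i; exact hult i]
  -- difference sets
  have hdisjST := disjoint_left.mp hdisj
  have hWB : univ.filter (fun i => Ww i ≠ Bw i) = SS := by
    ext i
    simp only [mem_filter, mem_univ, true_and, hWwdef, hBwdef]
    by_cases h : i ∈ SS <;> simp [h, huv i]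
  have hCD : univ.filter (fun i => Cw i ≠ Dw i) = SS := by
    ext i
    simp only [mem_filter, mem_univ, true_and, hCwdef, hDwdef]
    by_cases h : i ∈ SS
    · have hT : i ∉ TT := hdisjST h
      simp [h, hT, huv i]
    · by_cases h' : i ∈ TT <;> simp [h, h', huv i]
  have hWC : univ.filter (fun i => Ww i ≠ Cw i) = TT := by
    ext i
    simp only [mem_filter, mem_univ, true_and, hWwdef, hCwdef]
    by_cases h : i ∈ TT <;> simp [h, huv i]
  have hBD : univ.filter (fun i => Bw i ≠ Dw i) = TT := by
    ext i
    simp only [mem_filter, mem_univ, true_and, hBwdef, hDwdef]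
    by_cases h : i ∈ TT
    · have hS : i ∉ SS := fun hS => hdisjST hS h
      simp [h, hS, huv i]
    · by_cases h' : i ∈ SS <;> simp [h, h', huv i]
  have hWD : univ.filter (fun i => Ww i ≠ Dw i) = SS ∪ TT := by
    ext i
    simp only [mem_filter, mem_univ, true_and, hWwdef, hDwdef]
    by_cases h : i ∈ SS ∪ TT <;> simp [h, huv i]
  have hBC : univ.filter (fun i => Bw i ≠ Cw i) = SS ∪ TT := by
    ext i
    simp only [mem_filter, mem_univ, true_and, hBwdef, hCwdef]
    by_cases h : i ∈ SS
    · have hT : i ∉ TT := hdisjST h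
      simp [h, hT, mem_union, huv i, (huv i).symm]
    · by_cases h' : i ∈ TT <;> simp [h, h', mem_union, huv i, (huv i).symm]
  have hUcard : (SS ∪ TT).card = q + p := by
    rw [card_union_of_disjoint hdisj, hSScard, hTTcard]
  -- numeric facts
  have hqa : ((q : ℕ) : ℝ) * (a ^ 2 / q) = a ^ 2 := by field_simp
  have hpa : ((p : ℕ) : ℝ) * (a ^ 2 / q) = b ^ 2 := by
    field_simp
    linarith [key]
  have hqpa : (((q + p : ℕ)) : ℝ) * (a ^ 2 / q) = a ^ 2 + b ^ 2 := by
    push_cast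
    have : ((q:ℝ) + p) * (a ^ 2 / q) = (q:ℝ) * (a^2/q) + (p:ℝ) * (a^2/q) := by ring
    rw [this, hqa]
    push_cast at hpa
    rw [hpa]
  refine ⟨pt Ww, pt Bw, pt Cw, pt Dw, ?_, ?_, ?_, ?_, ?_, ?_, ?_⟩
  · rw [hdist Ww Bw hWlt hBlt, hWB, hSScard, hqa, Real.sqrt_sq ha.le]
  · rw [hdist Cw Dw hClt hDlt, hCD, hSScard, hqa, Real.sqrt_sq ha.le]
  · rw [hdist Ww Cw hWlt hClt, hWC, hTTcard, hpa, Real.sqrt_sq hb.le]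
  · rw [hdist Bw Dw hBlt hDlt, hBD, hTTcard, hpa, Real.sqrt_sq hb.le]
  · rw [hdist Ww Dw hWlt hDlt, hWD, hUcard, hqpa]
  · rw [hdist Bw Cw hBlt hClt, hBC, hUcard, hqpa]
  · -- mono or rainbow
    rcases hgood with hmono | ⟨i₀, hi₀S, i₁, hi₁S, hi₀SS, hi₁TT, hi₀TT, hi₁SS⟩
    · left
      have agree : ∀ (w' : Fin K → ℕ), (∀ i ∈ S, Ww i = w' i) →
          (∀ i, w' i ∈ A i) → χ (pt Ww) = χ (pt w') := by
        intro w' hagree hmem'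
        exact (hcanon Ww w' hWmem hmem').mpr hagree
      refine ⟨?_, ?_, ?_⟩
      · refine agree Bw (fun i hi => ?_) hBmem
        rw [hWwdef, hBwdef]
        simp [(hmono i hi).1]
      · refine agree Cw (fun i hi => ?_) hCmem
        rw [hWwdef, hCwdef]
        simp [(hmono i hi).2]
      · refine agree Dw (fun i hi => ?_) hDmem
        rw [hWwdef, hDwdef]
        simp [(hmono i hi).1, (hmono i hi).2]
    · right
      have neq : ∀ (w w' : Fin K → ℕ), (∀ i, w i ∈ A i) → (∀ i, w' i ∈ A i) →
          ∀ i₂ ∈ S, w i₂ ≠ w' i₂ → χ (pt w) ≠ χ (pt w') := by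
        intro w w' hm hm' i₂ hi₂ hne h
        exact hne ((hcanon w w' hm hm').mp h i₂ hi₂)
      refine ⟨?_, ?_, ?_, ?_, ?_, ?_⟩
      · refine neq Ww Bw hWmem hBmem i₀ hi₀S ?_
        rw [hWwdef, hBwdef]
        simp [hi₀SS, huv i₀]
      · refine neq Ww Cw hWmem hCmem i₁ hi₁S ?_
        rw [hWwdef, hCwdef]
        simp [hi₁TT, huv i₁]
      · refine neq Ww Dw hWmem hDmem i₀ hi₀S ?_
        rw [hWwdef, hDwdef]
        simp [mem_union, hi₀SS, huv i₀]
      · refine neq Bw Cw hBmem hCmem i₀ hi₀S ?_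
        rw [hBwdef, hCwdef]
        simp [hi₀SS, hi₀TT, (huv i₀).symm]
      · refine neq Bw Dw hBmem hDmem i₁ hi₁S ?_
        rw [hBwdef, hDwdef]
        simp [mem_union, hi₁SS, hi₁TT, huv i₁]
      · refine neq Cw Dw hCmem hDmem i₀ hi₀S ?_
        rw [hCwdef, hDwdef]
        simp [mem_union, hi₀SS, hi₀TT, huv i₀]
end
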